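/- arXiv:1604.05665 — 6 statements merged into one kernel-verified Lean document; each statement's English description precedes it below -/
import Mathlib

section
/- Let s ∈ (0,1) and let u : ℝⁿ → ℝ be bounded and twice continuously differentiable with bounded first and second derivatives. Fix x ∈ ℝⁿ and assume that the function h ↦ (2|u(x)| − |u(x+h)| − |u(x−h)|)|h|^{−n−2s} is integrable on ℝⁿ. Then the Kato inequality holds at x: (C_{n,s}/2) ∫_{ℝⁿ} (2|u(x)| − |u(x+h)| − |u(x−h)|) |h|^{−n−2s} dh ≤ sgn(u(x)) · (-Δ)^s u(x), where sgn(t) equals 1 for t > 0, −1 for t < 0, and 0 for t = 0. -/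
open MeasureTheory

/-- **Kato inequality** at a point for the fractional Laplacian on `ℝⁿ`, written in its
symmetrized second-difference form, where `Real.sign t` is `1` for `t > 0`, `-1` for `t < 0`
and `0` for `t = 0`. -/
theorem kato_inequality_fractional_laplacian {n : ℕ} (s : ℝ) (hs : s ∈ Set.Ioo (0 : ℝ) 1)
    (C : ℝ) (hC : 0 < C)
    (u : EuclideanSpace ℝ (Fin n) → ℝ) (hu : ContDiff ℝ 2 u)
    (hub : ∃ M, ∀ x, |u x| ≤ M)
    (hu1 : ∃ M, ∀ x, ‖fderiv ℝ u x‖ ≤ M)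
    (hu2 : ∃ M, ∀ x, ‖iteratedFDeriv ℝ 2 u x‖ ≤ M)
    (x : EuclideanSpace ℝ (Fin n))
    (hint : Integrable
      (fun h => (2 * |u x| - |u (x + h)| - |u (x - h)|) / ‖h‖ ^ ((n : ℝ) + 2 * s))) :
    C / 2 * ∫ h, (2 * |u x| - |u (x + h)| - |u (x - h)|) / ‖h‖ ^ ((n : ℝ) + 2 * s)
      ≤ Real.sign (u x) *
        (C / 2 * ∫ h, (2 * u x - u (x + h) - u (x - h)) / ‖h‖ ^ ((n : ℝ) + 2 * s)) := by
  obtain ⟨hs0, hs1⟩ := hs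
  set p : ℝ := (n : ℝ) + 2 * s with hp
  have hppos : 0 < p := by positivity
  -- the case `u x = 0`
  by_cases hne : u x = 0
  · have hσ0 : Real.sign (u x) = 0 := by rw [hne]; exact Real.sign_zero
    rw [hσ0, zero_mul]
    have hI : (∫ h, (2 * |u x| - |u (x + h)| - |u (x - h)|) / ‖h‖ ^ p) ≤ 0 := by
      apply integral_nonpos
      intro h
      apply div_nonpos_of_nonpos_of_nonneg
      · rw [hne]; simp [abs_nonneg, neg_nonpos]
        have := abs_nonneg (u (x + h)); have := abs_nonneg (u (x - h)); linarith
      · exact Real.rpow_nonneg (norm_nonneg _) _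
    have : 0 ≤ C / 2 := by linarith
    exact mul_nonpos_of_nonneg_of_nonpos this hI
  -- the case `u x ≠ 0`
  obtain ⟨M, hM⟩ := hub
  have hM0 : 0 ≤ M := le_trans (abs_nonneg _) (hM x)
  set σ : ℝ := Real.sign (u x) with hσ
  have hσu : σ * u x = |u x| := by
    rcases Ne.lt_or_gt hne with h | h
    · rw [hσ, Real.sign_of_neg h, abs_of_neg h]; ring
    · rw [hσ, Real.sign_of_pos h, abs_of_pos h]; ring
  have hσabs : ∀ t : ℝ, σ * t ≤ |t| := by
    intro t
    rcases Ne.lt_or_gt hne with h | h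
    · rw [hσ, Real.sign_of_neg h]
      calc (-1 : ℝ) * t = -t := by ring
        _ ≤ |t| := neg_le_abs t
    · rw [hσ, Real.sign_of_pos h, one_mul]; exact le_abs_self t
  have hcu : Continuous u := hu.continuous
  -- choose δ such that u has the same sign as u x on the ball of radius δ around x
  obtain ⟨δ, hδpos, hδ⟩ := Metric.continuousAt_iff.mp hcu.continuousAt |u x| (abs_pos.mpr hne)
  have hzero : ∀ y : EuclideanSpace ℝ (Fin n), dist y x < δ → |u y| - σ * u y = 0 := by
    intro y hy
    have h1 : |u y - u x| < |u x| := hδ hy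
    rw [abs_lt] at h1
    rcases Ne.lt_or_gt hne with h | h
    · have : u y < 0 := by rw [abs_of_neg h] at h1; linarith
      rw [hσ, Real.sign_of_neg h, abs_of_neg this]; ring
    · have : 0 < u y := by rw [abs_of_pos h] at h1; linarith
      rw [hσ, Real.sign_of_pos h, abs_of_pos this]; ring
  -- the difference function φ
  set num : EuclideanSpace ℝ (Fin n) → ℝ :=
    fun h => |u (x + h)| - σ * u (x + h) + (|u (x - h)| - σ * u (x - h)) with hnum
  set φ : EuclideanSpace ℝ (Fin n) → ℝ := fun h => num h / ‖h‖ ^ p with hφ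
  have hnum_nonneg : ∀ h, 0 ≤ num h := fun h => by
    have := hσabs (u (x + h)); have := hσabs (u (x - h)); simp only [hnum]; linarith
  have hφ_nonneg : ∀ h, 0 ≤ φ h := fun h =>
    div_nonneg (hnum_nonneg h) (Real.rpow_nonneg (norm_nonneg _) _)
  -- measurability
  have hc1 : Continuous fun h : EuclideanSpace ℝ (Fin n) => u (x + h) :=
    hcu.comp (continuous_const.add continuous_id)
  have hc2 : Continuous fun h : EuclideanSpace ℝ (Fin n) => u (x - h) :=
    hcu.comp (continuous_const.sub continuous_id)
  have hnumc : Continuous num :=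
    (hc1.abs.sub (continuous_const.mul hc1)).add (hc2.abs.sub (continuous_const.mul hc2))
  have hφmeas : AEStronglyMeasurable φ volume :=
    (hnumc.measurable.div
      ((Real.continuous_rpow_const hppos.le).comp continuous_norm).measurable).aestronglyMeasurable
  -- integrability of φ
  have hfr : (Module.finrank ℝ (EuclideanSpace ℝ (Fin n)) : ℝ) < p := by
    rw [finrank_euclideanSpace_fin]; simp only [hp]; linarith
  have hF : Integrable (fun h : EuclideanSpace ℝ (Fin n) =>
      (4 * M * (1 + 1 / δ) ^ p) * (1 + ‖h‖) ^ (-p)) :=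
    (integrable_one_add_norm hfr).const_mul _
  have hφ_int : Integrable φ := by
    refine hF.mono' hφmeas (Filter.Eventually.of_forall fun h => ?_)
    rcases lt_or_ge ‖h‖ δ with hlt | hge
    · have e1 : num h = 0 := by
        have d1 : dist (x + h) x < δ := by
          rw [dist_eq_norm]; simpa using hlt
        have d2 : dist (x - h) x < δ := by
          rw [dist_eq_norm]
          have : x - h - x = -h := by abel
          rw [this, norm_neg]; exact hlt
        simp only [hnum]
        rw [hzero _ d1, hzero _ d2, add_zero]
      have : φ h = 0 := by simp [hφ, e1]
      rw [this, norm_zero]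
      positivity
    · have hh0 : 0 < ‖h‖ := lt_of_lt_of_le hδpos hge
      have h1 : 0 < ‖h‖ ^ p := Real.rpow_pos_of_pos hh0 _
      have h2 : (0 : ℝ) < (1 + ‖h‖) ^ p := Real.rpow_pos_of_pos (by positivity) _
      have hnb : num h ≤ 4 * M := by
        have a1 : -|u (x + h)| ≤ σ * u (x + h) := by
          have := hσabs (-(u (x + h))); rw [abs_neg] at this; linarith
        have a2 : -|u (x - h)| ≤ σ * u (x - h) := by
          have := hσabs (-(u (x - h))); rw [abs_neg] at this; linarith
        have b1 := hM (x + h); have b2 := hM (x - h)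
        simp only [hnum]
        linarith
      have key : (1 + ‖h‖) ^ p ≤ (1 + 1 / δ) ^ p * ‖h‖ ^ p := by
        rw [← Real.mul_rpow (by positivity) (norm_nonneg _)]
        apply Real.rpow_le_rpow (by positivity) _ hppos.le
        have : δ * (1 / δ) = 1 := mul_one_div_cancel hδpos.ne'
        nlinarith
      have : ‖φ h‖ = num h / ‖h‖ ^ p := by
        rw [hφ, Real.norm_eq_abs, abs_div, abs_of_nonneg (hnum_nonneg h),
          abs_of_nonneg h1.le]
      rw [this]
      rw [Real.rpow_neg (by positivity), mul_comm ((4 : ℝ) * M * (1 + 1 / δ) ^ p),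
        ← div_eq_inv_mul, div_le_div_iff₀ h1 h2]
      calc num h * (1 + ‖h‖) ^ p ≤ 4 * M * ((1 + 1 / δ) ^ p * ‖h‖ ^ p) := by
            apply mul_le_mul hnb key h2.le (by positivity)
        _ = 4 * M * (1 + 1 / δ) ^ p * ‖h‖ ^ p := by ring
  -- the pointwise identity
  have hid : (fun h => (2 * |u x| - |u (x + h)| - |u (x - h)|) / ‖h‖ ^ p + φ h)
      = fun h => σ * ((2 * u x - u (x + h) - u (x - h)) / ‖h‖ ^ p) := by
    funext h
    rw [hφ, ← add_div, ← mul_div_assoc]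
    congr 1
    simp only [hnum]
    linarith [hσu]
  -- conclude
  have hle : (∫ h, (2 * |u x| - |u (x + h)| - |u (x - h)|) / ‖h‖ ^ p)
      ≤ σ * ∫ h, (2 * u x - u (x + h) - u (x - h)) / ‖h‖ ^ p := by
    calc (∫ h, (2 * |u x| - |u (x + h)| - |u (x - h)|) / ‖h‖ ^ p)
        ≤ (∫ h, (2 * |u x| - |u (x + h)| - |u (x - h)|) / ‖h‖ ^ p) + ∫ h, φ h :=
          le_add_of_nonneg_right (integral_nonneg hφ_nonneg)
      _ = ∫ h, ((2 * |u x| - |u (x + h)| - |u (x - h)|) / ‖h‖ ^ p + φ h) :=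
          (integral_add hint hφ_int).symm
      _ = ∫ h, σ * ((2 * u x - u (x + h) - u (x - h)) / ‖h‖ ^ p) := by rw [hid]
      _ = σ * ∫ h, (2 * u x - u (x + h) - u (x - h)) / ‖h‖ ^ p := integral_const_mul σ _
  calc C / 2 * ∫ h, (2 * |u x| - |u (x + h)| - |u (x - h)|) / ‖h‖ ^ p
      ≤ C / 2 * (σ * ∫ h, (2 * u x - u (x + h) - u (x - h)) / ‖h‖ ^ p) :=
        mul_le_mul_of_nonneg_left hle (by linarith)
    _ = σ * (C / 2 * ∫ h, (2 * u x - u (x + h) - u (x - h)) / ‖h‖ ^ p) := by ring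
end

section
/- Let K : ℝⁿ → [0,∞) be measurable, u : ℝⁿ → ℝ measurable, and φ : ℝ → ℝ convex and differentiable at u(x). Define the non-divergence form nonlocal operator ℐv(x) = ∫_{ℝⁿ} (2v(x) − v(x+y) − v(x−y)) K(y) dy. Fix x ∈ ℝⁿ and assume that the integrals defining ℐu(x) and ℐ(φ∘u)(x) converge absolutely. Then ℐ(φ∘u)(x) ≤ φ'(u(x)) · ℐu(x). -/
open MeasureTheory

lemma convex_tangent_line {φ : ℝ → ℝ} (hconv : ConvexOn ℝ Set.univ φ)
    {a : ℝ} (hd : DifferentiableAt ℝ φ a) (b : ℝ) :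
    φ a + deriv φ a * (b - a) ≤ φ b := by
  rcases lt_trichotomy a b with h | rfl | h
  · have := hconv.deriv_le_slope (Set.mem_univ a) (Set.mem_univ b) h hd
    rw [slope_def_field] at this
    have hba : (0:ℝ) < b - a := by linarith
    have := (le_div_iff₀ hba).mp this
    linarith
  · simp
  · have := hconv.slope_le_deriv (Set.mem_univ b) (Set.mem_univ a) h hd
    rw [slope_def_field] at this
    have hab : (0:ℝ) < a - b := by linarith
    have := (div_le_iff₀ hab).mp this
    nlinarith

/-- **Córdoba–Córdoba inequality** for nonlocal operators in non-divergence form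
`ℐv(x) = ∫ (2v(x) - v(x+y) - v(x-y)) K(y) dy` with a nonnegative kernel `K`. -/
theorem cordoba_cordoba_nondivergence {n : ℕ}
    (K : EuclideanSpace ℝ (Fin n) → ℝ) (hKmeas : Measurable K) (hK0 : ∀ y, 0 ≤ K y)
    (u : EuclideanSpace ℝ (Fin n) → ℝ) (humeas : Measurable u)
    (x : EuclideanSpace ℝ (Fin n))
    (φ : ℝ → ℝ) (hconv : ConvexOn ℝ Set.univ φ) (hd : DifferentiableAt ℝ φ (u x))
    (h1 : Integrable (fun y => (2 * u x - u (x + y) - u (x - y)) * K y))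
    (h2 : Integrable (fun y => (2 * φ (u x) - φ (u (x + y)) - φ (u (x - y))) * K y)) :
    ∫ y, (2 * φ (u x) - φ (u (x + y)) - φ (u (x - y))) * K y
      ≤ deriv φ (u x) * ∫ y, (2 * u x - u (x + y) - u (x - y)) * K y := by
  rw [← integral_const_mul]
  refine integral_mono h2 (h1.const_mul _) (fun y => ?_)
  have hb := convex_tangent_line hconv hd (u (x + y))
  have hc := convex_tangent_line hconv hd (u (x - y))
  have key : 2 * φ (u x) - φ (u (x + y)) - φ (u (x - y))
      ≤ deriv φ (u x) * (2 * u x - u (x + y) - u (x - y)) := by nlinarith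
  calc _ ≤ deriv φ (u x) * (2 * u x - u (x + y) - u (x - y)) * K y := mul_le_mul_of_nonneg_right key (hK0 y)
    _ = _ := by ring
end

section
/- Let (X, μ) be a measure space, let K : X × X → [0,∞) be measurable, let u : X → ℝ be measurable, and let φ : ℝ → ℝ be convex and differentiable at u(x). Define ℒv(x) = ∫_X (v(x) − v(y)) K(x,y) dμ(y). Fix x ∈ X and assume that the integrals defining ℒu(x) and ℒ(φ∘u)(x) converge absolutely. Then the Córdoba–Córdoba inequality holds at x: ℒ(φ∘u)(x) ≤ φ'(u(x)) · ℒu(x). -/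
open MeasureTheory

lemma convex_tangent_ineq {φ : ℝ → ℝ} (hconv : ConvexOn ℝ Set.univ φ)
    {a : ℝ} (hd : DifferentiableAt ℝ φ a) (b : ℝ) :
    φ a - φ b ≤ deriv φ a * (a - b) := by
  rcases lt_trichotomy a b with h | h | h
  · have := hconv.deriv_le_slope (Set.mem_univ a) (Set.mem_univ b) h hd
    rw [slope_def_field] at this
    have hba : 0 < b - a := by linarith
    rw [le_div_iff₀ hba] at this; nlinarith
  · simp [h]
  · have := hconv.slope_le_deriv (Set.mem_univ b) (Set.mem_univ a) h hd
    rw [slope_def_field] at this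
    have hab : 0 < a - b := by linarith
    rw [div_le_iff₀ hab] at this; nlinarith

/-- **Córdoba–Córdoba inequality** for integral operators
`ℒv(x) = ∫ (v(x) - v(y)) K(x,y) dμ(y)` with nonnegative kernel `K` on a measure space. -/
theorem cordoba_cordoba_integral_operator {X : Type*} [MeasurableSpace X]
    (μ : Measure X) (K : X × X → ℝ) (hKmeas : Measurable K) (hK0 : ∀ p, 0 ≤ K p)
    (u : X → ℝ) (humeas : Measurable u) (x : X)
    (φ : ℝ → ℝ) (hconv : ConvexOn ℝ Set.univ φ) (hd : DifferentiableAt ℝ φ (u x))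
    (h1 : Integrable (fun y => (u x - u y) * K (x, y)) μ)
    (h2 : Integrable (fun y => (φ (u x) - φ (u y)) * K (x, y)) μ) :
    ∫ y, (φ (u x) - φ (u y)) * K (x, y) ∂μ
      ≤ deriv φ (u x) * ∫ y, (u x - u y) * K (x, y) ∂μ := by
  rw [← integral_const_mul]
  refine integral_mono h2 (h1.const_mul _) fun y => ?_
  have := convex_tangent_ineq hconv hd (u y)
  have hK := hK0 (x, y)
  simp only [← mul_assoc]
  exact mul_le_mul_of_nonneg_right this hK
end

section
/- Let G be a locally compact topological group with a (left) Haar measure μ, let K : G → [0,∞) be measurable, let u : G → ℝ be measurable, and let φ : ℝ → ℝ be convex and differentiable at u(x). Define ℒv(x) = ∫_G (v(x) − v(y)) K(y⁻¹x) dμ(y). Fix x ∈ G and assume that the integrals defining ℒu(x) and ℒ(φ∘u)(x) converge absolutely. Then ℒ(φ∘u)(x) ≤ φ'(u(x)) · ℒu(x). -/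
open MeasureTheory

lemma support_line (φ : ℝ → ℝ) (hconv : ConvexOn ℝ Set.univ φ) {a : ℝ}
    (hd : DifferentiableAt ℝ φ a) (b : ℝ) :
    φ a - φ b ≤ deriv φ a * (a - b) := by
  rcases lt_trichotomy a b with h | rfl | h
  · have h' := hconv.deriv_le_slope (Set.mem_univ a) (Set.mem_univ b) h hd
    rw [slope_def_field, le_div_iff₀ (by linarith)] at h'
    nlinarith
  · simp
  · have h' := hconv.slope_le_deriv (Set.mem_univ b) (Set.mem_univ a) h hd
    rw [slope_def_field, div_le_iff₀ (by linarith)] at h'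
    nlinarith

/-- **Córdoba–Córdoba inequality** for Gagliardo-type nonlocal operators
`ℒv(x) = ∫ (v(x) - v(y)) K(y⁻¹x) dμ(y)` on a locally compact topological group with
Haar measure `μ` and nonnegative kernel `K`. -/
theorem cordoba_cordoba_lie_group {G : Type*} [Group G] [TopologicalSpace G]
    [IsTopologicalGroup G] [LocallyCompactSpace G] [MeasurableSpace G] [BorelSpace G]
    (μ : Measure G) [μ.IsHaarMeasure]
    (K : G → ℝ) (hKmeas : Measurable K) (hK0 : ∀ g, 0 ≤ K g)
    (u : G → ℝ) (humeas : Measurable u) (x : G)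
    (φ : ℝ → ℝ) (hconv : ConvexOn ℝ Set.univ φ) (hd : DifferentiableAt ℝ φ (u x))
    (h1 : Integrable (fun y => (u x - u y) * K (y⁻¹ * x)) μ)
    (h2 : Integrable (fun y => (φ (u x) - φ (u y)) * K (y⁻¹ * x)) μ) :
    ∫ y, (φ (u x) - φ (u y)) * K (y⁻¹ * x) ∂μ
      ≤ deriv φ (u x) * ∫ y, (u x - u y) * K (y⁻¹ * x) ∂μ := by
  rw [← integral_const_mul]
  refine integral_mono h2 (h1.const_mul _) fun y => ?_
  simp only [← mul_assoc]
  exact mul_le_mul_of_nonneg_right (support_line φ hconv hd (u y)) (hK0 _)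
end

section
/- Let a ∈ (−1,1), R > 0, and let 𝒞 = B_R × (0,1) ⊂ ℝⁿ × ℝ, where B_R is the open ball of radius R centered at 0 in ℝⁿ. Let u be continuous on the closure of 𝒞, twice continuously differentiable in 𝒞, and satisfy: (i) Δu + (a/y) ∂_y u ≤ 0 in 𝒞 (i.e. u is a supersolution of the equation div(y^a ∇u) = 0), (ii) u > 0 in 𝒞, and (iii) u(0,0) = 0. Then limsup_{y → 0⁺} ( −y^{a−1} u(0,y) ) < 0; equivalently, liminf_{y → 0⁺} y^{a−1} u(0,y) > 0, so there exist c > 0 and y₀ ∈ (0,1) with u(0,y) ≥ c·y^{1−a} for all y ∈ (0,y₀). -/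
open MeasureTheory

noncomputable def halfSpaceLaplacian {n : ℕ} (w : EuclideanSpace ℝ (Fin n) × ℝ → ℝ)
    (p : EuclideanSpace ℝ (Fin n) × ℝ) : ℝ :=
  (∑ i : Fin n, iteratedFDeriv ℝ 2 w p
      ![(EuclideanSpace.single i (1 : ℝ), (0 : ℝ)), (EuclideanSpace.single i (1 : ℝ), (0 : ℝ))])
  + iteratedFDeriv ℝ 2 w p
      ![((0 : EuclideanSpace ℝ (Fin n)), (1 : ℝ)), ((0 : EuclideanSpace ℝ (Fin n)), (1 : ℝ))]

section HopfAuxSection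
open Metric Set Filter Topology
namespace HopfAux

variable {E' : Type*} [NormedAddCommGroup E'] [NormedSpace ℝ E']

lemma line_hasDerivAt (p e : E') (t : ℝ) :
    HasDerivAt (fun s : ℝ => p + s • e) e t := by
  simpa using ((hasDerivAt_id t).smul_const e).const_add p

lemma second_deriv_nonneg_of_isLocalMin {φ : ℝ → ℝ} (hφ : ContDiffAt ℝ 2 φ 0)
    (hmin : IsLocalMin φ 0) : 0 ≤ deriv (deriv φ) 0 := by
  by_contra hK
  push_neg at hK
  obtain ⟨U0, hU0, hφU0⟩ := hφ.contDiffOn le_rfl (by simp)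
  obtain ⟨U, hUsub, hUo, hU0m⟩ := _root_.mem_nhds_iff.1 hU0
  have hφU : ContDiffOn ℝ 2 φ U := hφU0.mono hUsub
  have hfC1 : ContDiffOn ℝ 1 (deriv φ) U := hφU.deriv_of_isOpen hUo (by norm_num)
  have hfd : DifferentiableAt ℝ (deriv φ) 0 :=
    (hfC1.differentiableOn (by norm_num)).differentiableAt (hUo.mem_nhds hU0m)
  have hf0 : deriv φ 0 = 0 := hmin.deriv_eq_zero
  have hslope : Tendsto (slope (deriv φ) 0) (𝓝[≠] 0) (𝓝 (deriv (deriv φ) 0)) :=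
    hasDerivAt_iff_tendsto_slope.1 hfd.hasDerivAt
  have hneg : ∀ᶠ t in 𝓝[≠] (0:ℝ), slope (deriv φ) 0 t < 0 :=
    hslope.eventually_mem (Iio_mem_nhds hK)
  obtain ⟨δ', hδ', hsl⟩ := Metric.mem_nhdsWithin_iff.1 hneg
  have hUe : ∀ᶠ t in 𝓝 (0:ℝ), t ∈ U := eventually_of_mem (hUo.mem_nhds hU0m) fun _ h => h
  obtain ⟨δ, hδ, hball⟩ := Metric.eventually_nhds_iff_ball.1 (hmin.and hUe)
  set t₀ := min δ δ' / 2 with ht₀def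
  have ht₀ : 0 < t₀ := by positivity
  have ht₀δ : t₀ < δ := by
    have := min_le_left δ δ'; simp only [ht₀def]; linarith
  have ht₀δ' : t₀ < δ' := by
    have := min_le_right δ δ'; simp only [ht₀def]; linarith
  have hIccU : Icc 0 t₀ ⊆ U := by
    intro s hs
    have : s ∈ ball (0:ℝ) δ := by
      rw [mem_ball, Real.dist_eq, sub_zero, abs_of_nonneg hs.1]
      exact lt_of_le_of_lt hs.2 ht₀δ
    exact (hball s this).2
  have hfneg : ∀ s ∈ Ioo (0:ℝ) t₀, deriv φ s < 0 := by
    intro s hs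
    have hsm : s ∈ ball (0:ℝ) δ' ∩ {(0:ℝ)}ᶜ := by
      constructor
      · rw [mem_ball, Real.dist_eq, sub_zero, abs_of_pos hs.1]
        exact lt_trans hs.2 ht₀δ'
      · exact fun h => absurd h (ne_of_gt hs.1)
    have := hsl hsm
    rw [mem_setOf_eq, slope_def_field, hf0] at this
    have h2 : (deriv φ s - 0) / (s - 0) < 0 := by
      simpa [div_eq_mul_inv] using this
    rw [sub_zero, sub_zero] at h2
    exact (div_neg_iff.1 h2).elim (fun h => absurd h.2 (not_lt.2 hs.1.le)) fun h => h.1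
  have hanti : StrictAntiOn φ (Icc 0 t₀) := by
    apply strictAntiOn_of_deriv_neg (convex_Icc 0 t₀) (hφU.continuousOn.mono hIccU)
    intro s hs
    rw [interior_Icc] at hs
    exact hfneg s hs
  have hlt : φ t₀ < φ 0 := hanti ⟨le_rfl, ht₀.le⟩ ⟨ht₀.le, le_rfl⟩ ht₀
  have hge : φ 0 ≤ φ t₀ := by
    have : t₀ ∈ ball (0:ℝ) δ := by
      rw [mem_ball, Real.dist_eq, sub_zero, abs_of_pos ht₀]; exact ht₀δ
    exact (hball t₀ this).1
  linarith

lemma fderiv_line {v : E' → ℝ} {p : E'} (e : E') (hv : DifferentiableAt ℝ v p) :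
    fderiv ℝ v p e = deriv (fun t : ℝ => v (p + t • e)) 0 := by
  have h := hv.hasFDerivAt.comp_hasDerivAt_of_eq 0 (line_hasDerivAt p e 0) (by simp)
  exact (by simpa [Function.comp_def] using h.deriv : deriv (fun t : ℝ => v (p + t • e)) 0
    = fderiv ℝ v p e).symm

lemma iteratedFDeriv_two_line {v : E' → ℝ} {p : E'} (e : E') (hv : ContDiffAt ℝ 2 v p) :
    iteratedFDeriv ℝ 2 v p ![e, e] = deriv (deriv (fun t : ℝ => v (p + t • e))) 0 := by
  obtain ⟨U0, hU0, hvU0⟩ := hv.contDiffOn le_rfl (by simp)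
  obtain ⟨U, hUsub, hUo, hUm⟩ := _root_.mem_nhds_iff.1 hU0
  have hvU : ContDiffOn ℝ 2 v U := hvU0.mono hUsub
  have hD : ContDiffOn ℝ 1 (fderiv ℝ v) U := hvU.fderiv_of_isOpen hUo (by norm_num)
  have hev : ∀ᶠ t in 𝓝 (0:ℝ), p + t • e ∈ U := by
    have hline : Continuous (fun t : ℝ => p + t • e) := by continuity
    have h0 : Tendsto (fun t : ℝ => p + t • e) (𝓝 0) (𝓝 p) := by
      have := hline.tendsto 0
      simpa using this
    exact h0.eventually_mem (hUo.mem_nhds hUm)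
  have heq : deriv (fun t : ℝ => v (p + t • e)) =ᶠ[𝓝 0]
      fun t => fderiv ℝ v (p + t • e) e := by
    filter_upwards [hev] with t ht
    have hdv : DifferentiableAt ℝ v (p + t • e) :=
      (hvU.differentiableOn (by norm_num)).differentiableAt (hUo.mem_nhds ht)
    have := hdv.hasFDerivAt.comp_hasDerivAt t (line_hasDerivAt p e t)
    simpa [Function.comp_def] using this.deriv
  rw [heq.deriv_eq]
  have hDd : DifferentiableAt ℝ (fderiv ℝ v) p :=
    (hD.differentiableOn (by norm_num)).differentiableAt (hUo.mem_nhds hUm)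
  have h1 : HasDerivAt (fun t : ℝ => fderiv ℝ v (p + t • e)) (fderiv ℝ (fderiv ℝ v) p e) 0 := by
    have := hDd.hasFDerivAt.comp_hasDerivAt_of_eq 0 (line_hasDerivAt p e 0) (by simp)
    simpa [Function.comp_def] using this
  have h2 : HasDerivAt (fun t : ℝ => fderiv ℝ v (p + t • e) e)
      (fderiv ℝ (fderiv ℝ v) p e e) 0 := by
    have := (ContinuousLinearMap.apply ℝ ℝ e).hasFDerivAt.comp_hasDerivAt 0 h1
    simpa [Function.comp_def] using this
  rw [iteratedFDeriv_two_apply, h2.deriv]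
  simp

lemma deriv2_sub {f g : ℝ → ℝ} (ε : ℝ) (hf : ContDiffAt ℝ 2 f 0) (hg : ContDiffAt ℝ 2 g 0) :
    deriv (deriv (fun t => f t - ε * g t)) 0
      = deriv (deriv f) 0 - ε * deriv (deriv g) 0 := by
  obtain ⟨U0, hU0, hfU0⟩ := hf.contDiffOn le_rfl (by simp)
  obtain ⟨V0, hV0, hgV0⟩ := hg.contDiffOn le_rfl (by simp)
  obtain ⟨U, hUsub, hUo, hUm⟩ := _root_.mem_nhds_iff.1 (inter_mem hU0 hV0)
  have hfU : ContDiffOn ℝ 2 f U := hfU0.mono (hUsub.trans inter_subset_left)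
  have hgU : ContDiffOn ℝ 2 g U := hgV0.mono (hUsub.trans inter_subset_right)
  have heq : deriv (fun t => f t - ε * g t) =ᶠ[𝓝 0]
      fun t => deriv f t - ε * deriv g t := by
    filter_upwards [eventually_of_mem (hUo.mem_nhds hUm) fun x hx => hx] with t ht
    have h1 : DifferentiableAt ℝ f t :=
      (hfU.differentiableOn (by norm_num)).differentiableAt (hUo.mem_nhds ht)
    have h2 : DifferentiableAt ℝ g t :=
      (hgU.differentiableOn (by norm_num)).differentiableAt (hUo.mem_nhds ht)
    exact (h1.hasDerivAt.sub (h2.hasDerivAt.const_mul ε)).deriv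
  rw [heq.deriv_eq]
  have hdf : DifferentiableAt ℝ (deriv f) 0 :=
    (((hfU.deriv_of_isOpen hUo (m := 1) (by norm_num)).differentiableOn (by norm_num))).differentiableAt
      (hUo.mem_nhds hUm)
  have hdg : DifferentiableAt ℝ (deriv g) 0 :=
    (((hgU.deriv_of_isOpen hUo (m := 1) (by norm_num)).differentiableOn (by norm_num))).differentiableAt
      (hUo.mem_nhds hUm)
  exact (hdf.hasDerivAt.sub (hdg.hasDerivAt.const_mul ε)).deriv

lemma hasDerivAt_shift_rpow (C e : ℝ) {y t : ℝ} (h : y + t ≠ 0) :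
    HasDerivAt (fun s : ℝ => C * (y + s) ^ e) (C * (e * (y + t) ^ (e - 1))) t := by
  have h1 : HasDerivAt (fun s : ℝ => y + s) 1 t := (hasDerivAt_id t).const_add y
  have h2 : HasDerivAt (fun z : ℝ => z ^ e) (e * (y + t) ^ (e - 1)) (y + t) :=
    Real.hasDerivAt_rpow_const (Or.inl h)
  simpa [Function.comp] using (h2.comp t h1).const_mul C

lemma deriv_rpow_pair (P c e1 e2 : ℝ) {y : ℝ} (hy : 0 < y) :
    deriv (fun t : ℝ => P * (y + t) ^ e1 + c * (y + t) ^ e2) 0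
      = P * (e1 * y ^ (e1 - 1)) + c * (e2 * y ^ (e2 - 1)) := by
  have h := ((hasDerivAt_shift_rpow P e1 (t := 0) (by simpa using hy.ne')).add
    (hasDerivAt_shift_rpow c e2 (t := 0) (by simpa using hy.ne'))).deriv
  simp only [add_zero] at h
  exact h

lemma deriv2_rpow_pair (P c e1 e2 : ℝ) {y : ℝ} (hy : 0 < y) :
    deriv (deriv (fun t : ℝ => P * (y + t) ^ e1 + c * (y + t) ^ e2)) 0
      = P * (e1 * ((e1 - 1) * y ^ (e1 - 1 - 1))) + c * (e2 * ((e2 - 1) * y ^ (e2 - 1 - 1))) := by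
  have hev : ∀ᶠ t in 𝓝 (0:ℝ), 0 < y + t := by
    filter_upwards [Ioo_mem_nhds (neg_lt_zero.2 hy) hy] with t ht
    linarith [ht.1]
  have heq : deriv (fun t : ℝ => P * (y + t) ^ e1 + c * (y + t) ^ e2) =ᶠ[𝓝 0]
      fun t => P * (e1 * (y + t) ^ (e1 - 1)) + c * (e2 * (y + t) ^ (e2 - 1)) := by
    filter_upwards [hev] with t ht
    exact ((hasDerivAt_shift_rpow P e1 ht.ne').add (hasDerivAt_shift_rpow c e2 ht.ne')).deriv
  rw [heq.deriv_eq]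
  have h1 := ((hasDerivAt_shift_rpow e1 (e1 - 1) (t := (0:ℝ)) (by simpa using hy.ne')).const_mul
    P).add ((hasDerivAt_shift_rpow e2 (e2 - 1) (t := (0:ℝ)) (by simpa using hy.ne')).const_mul c)
  have h2 := h1.deriv
  simp only [add_zero] at h2
  exact h2

lemma deriv2_quad (C0 C1 C2 : ℝ) :
    deriv (deriv (fun t : ℝ => C0 + C1 * t + C2 * t ^ 2)) 0 = 2 * C2 := by
  have h1 : ∀ t : ℝ, HasDerivAt (fun s : ℝ => C0 + C1 * s + C2 * s ^ 2)
      (C1 + C2 * (2 * t)) t := by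
    intro t
    have ha : HasDerivAt (fun s : ℝ => C0 + C1 * s) C1 t := by
      simpa using ((hasDerivAt_id t).const_mul C1).const_add C0
    have hb : HasDerivAt (fun s : ℝ => C2 * s ^ 2) (C2 * (2 * t)) t := by
      simpa using (hasDerivAt_pow 2 t).const_mul C2
    exact ha.add hb
  have h2 : deriv (fun s : ℝ => C0 + C1 * s + C2 * s ^ 2) = fun t => C1 + C2 * (2 * t) :=
    funext fun t => (h1 t).deriv
  rw [h2]
  have h3 : HasDerivAt (fun t : ℝ => C1 + C2 * (2 * t)) (C2 * 2) 0 := by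
    simpa using (((hasDerivAt_id (0:ℝ)).const_mul (2:ℝ)).const_mul C2).const_add C1
  simpa [mul_comm] using h3.deriv

end HopfAux
end HopfAuxSection

set_option maxHeartbeats 2000000 in
open Metric Set Filter Topology in
/-- **Hopf lemma** for the degenerate elliptic operator `L_a u = div(y^a ∇u)`, i.e.
`y^a (Δu + (a/y)∂_y u)`, on the cylinder `𝒞 = B_R × (0,1)`: a positive supersolution which
is continuous up to the boundary and vanishes at `(0,0)` satisfies
`u(0,y) ≥ c · y^{1-a}` near `y = 0`, i.e. `limsup_{y→0⁺}(-y^{a-1}u(0,y)) < 0`. -/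
theorem hopf_lemma_degenerate {n : ℕ} (a : ℝ) (ha : a ∈ Set.Ioo (-1 : ℝ) 1) (R : ℝ)
    (hR : 0 < R)
    (u : EuclideanSpace ℝ (Fin n) × ℝ → ℝ)
    (hcont : ContinuousOn u
      (closure ((Metric.ball (0 : EuclideanSpace ℝ (Fin n)) R) ×ˢ Set.Ioo (0 : ℝ) 1)))
    (hC2 : ContDiffOn ℝ 2 u
      ((Metric.ball (0 : EuclideanSpace ℝ (Fin n)) R) ×ˢ Set.Ioo (0 : ℝ) 1))
    (hsuper : ∀ p ∈ (Metric.ball (0 : EuclideanSpace ℝ (Fin n)) R) ×ˢ Set.Ioo (0 : ℝ) 1,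
      halfSpaceLaplacian u p + a / p.2 * fderiv ℝ u p (0, 1) ≤ 0)
    (hpos : ∀ p ∈ (Metric.ball (0 : EuclideanSpace ℝ (Fin n)) R) ×ˢ Set.Ioo (0 : ℝ) 1,
      0 < u p)
    (hzero : u (0, 0) = 0) :
    ∃ c > 0, ∃ y₀ ∈ Set.Ioo (0 : ℝ) 1, ∀ y ∈ Set.Ioo (0 : ℝ) y₀,
      c * y ^ (1 - a) ≤ u (0, y) := by
  obtain ⟨ha1, ha2⟩ := ha
  have h1a : 0 < 1 - a := by linarith
  have h3a : 0 < 3 - a := by linarith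
  set r : ℝ := min R 1 / 2 with hr_def
  have hr0 : 0 < r := by
    have : 0 < min R 1 := lt_min hR one_pos
    positivity
  have hrR : r < R := by
    have h := min_le_left R 1
    rw [hr_def]; linarith
  have hr1 : r < 1 := by
    have h := min_le_right R 1
    rw [hr_def]; linarith
  set cc : ℝ := (n : ℝ) + 1 with hcc_def
  have hcc0 : 0 < cc := by positivity
  set y₀ : ℝ := r / ((n : ℝ) + 2) with hy₀_def
  have hn2 : (1 : ℝ) < (n : ℝ) + 2 := by
    have : (0:ℝ) ≤ (n:ℝ) := Nat.cast_nonneg n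
    linarith
  have hy₀0 : 0 < y₀ := by rw [hy₀_def]; positivity
  have hy₀r : y₀ < r := by
    rw [hy₀_def]
    exact div_lt_self hr0 hn2
  have hy₀1 : y₀ < 1 := hy₀r.trans hr1
  have hA0 : 0 < r ^ 2 - cc * y₀ ^ 2 := by
    have hnn : (0:ℝ) ≤ (n:ℝ) := Nat.cast_nonneg n
    have h2 : (0:ℝ) < ((n:ℝ) + 2) ^ 2 := by positivity
    have hy₀sq : y₀ ^ 2 = r ^ 2 / ((n:ℝ) + 2) ^ 2 := by rw [hy₀_def, div_pow]
    rw [sub_pos, hcc_def, hy₀sq, mul_div_assoc', div_lt_iff₀ h2]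
    nlinarith [pow_pos hr0 2, mul_nonneg hnn hnn, mul_nonneg hnn (pow_pos hr0 2).le,
      mul_nonneg (mul_nonneg hnn hnn) (pow_pos hr0 2).le]
  set A : ℝ := r ^ 2 - cc * y₀ ^ 2 with hA_def
  set w : EuclideanSpace ℝ (Fin n) × ℝ → ℝ :=
    fun p => (A - ‖p.1‖ ^ 2) * p.2 ^ (1 - a) + cc * p.2 ^ (3 - a) with hw_def
  -- the big cylinder
  set C : Set (EuclideanSpace ℝ (Fin n) × ℝ) :=
    (Metric.ball (0 : EuclideanSpace ℝ (Fin n)) R) ×ˢ Set.Ioo (0 : ℝ) 1 with hC_def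
  have hCopen : IsOpen C := Metric.isOpen_ball.prod isOpen_Ioo
  have hclosure : closure C
      = (Metric.closedBall (0 : EuclideanSpace ℝ (Fin n)) R) ×ˢ Set.Icc (0 : ℝ) 1 := by
    rw [hC_def, closure_prod_eq, closure_ball _ hR.ne', closure_Ioo (zero_ne_one)]
  have hu_nonneg : ∀ p ∈ closure C, 0 ≤ u p := by
    intro p hp
    have hclosed : IsClosed (closure C ∩ u ⁻¹' Set.Ici 0) :=
      hcont.preimage_isClosed_of_isClosed isClosed_closure isClosed_Ici
    have hsub : C ⊆ closure C ∩ u ⁻¹' Set.Ici 0 :=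
      fun q hq => ⟨subset_closure hq, (hpos q hq).le⟩
    exact (closure_minimal hsub hclosed hp).2
  -- small sets
  set K : Set (EuclideanSpace ℝ (Fin n) × ℝ) :=
    (Metric.closedBall (0 : EuclideanSpace ℝ (Fin n)) r) ×ˢ Set.Icc (0 : ℝ) y₀ with hK_def
  set S : Set (EuclideanSpace ℝ (Fin n) × ℝ) :=
    (Metric.ball (0 : EuclideanSpace ℝ (Fin n)) r) ×ˢ Set.Ioo (0 : ℝ) y₀ with hS_def
  have hSK : S ⊆ K := Set.prod_mono Metric.ball_subset_closedBall Set.Ioo_subset_Icc_self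
  have hKclos : K ⊆ closure C := by
    rw [hclosure]
    exact Set.prod_mono (Metric.closedBall_subset_closedBall hrR.le)
      (Set.Icc_subset_Icc le_rfl hy₀1.le)
  have hSC : S ⊆ C := Set.prod_mono (Metric.ball_subset_ball hrR.le)
    (Set.Ioo_subset_Ioo le_rfl hy₀1.le)
  have hKcpt : IsCompact K := (isCompact_closedBall _ _).prod isCompact_Icc
  have hKne : K.Nonempty := ⟨(0, 0), by
    constructor
    · simp [hr0.le]
    · exact ⟨le_rfl, hy₀0.le⟩⟩
  -- minimum of u on the top
  set T : Set (EuclideanSpace ℝ (Fin n) × ℝ) :=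
    (Metric.closedBall (0 : EuclideanSpace ℝ (Fin n)) r) ×ˢ ({y₀} : Set ℝ) with hT_def
  have hTC : T ⊆ C := by
    rintro ⟨x, y⟩ ⟨hx, hy⟩
    simp only [Set.mem_singleton_iff] at hy
    refine ⟨?_, ?_⟩
    · simp only [Metric.mem_closedBall] at hx
      simp only [Metric.mem_ball]
      exact lt_of_le_of_lt hx hrR
    · subst hy; exact ⟨hy₀0, hy₀1⟩
  have hTcpt : IsCompact T := (isCompact_closedBall _ _).prod isCompact_singleton
  have hTne : T.Nonempty := ⟨(0, y₀), Set.mem_prod.2 ⟨by simp [hr0.le], rfl⟩⟩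
  obtain ⟨z₀, hz₀T, hz₀min⟩ := hTcpt.exists_isMinOn hTne (hC2.continuousOn.mono hTC)
  have hm0 : 0 < u z₀ := hpos z₀ (hTC hz₀T)
  have hY₀pos : 0 < y₀ ^ (1 - a) := Real.rpow_pos_of_pos hy₀0 _
  have hden : 0 < r ^ 2 * y₀ ^ (1 - a) := mul_pos (pow_pos hr0 2) hY₀pos
  set ε : ℝ := u z₀ / (r ^ 2 * y₀ ^ (1 - a)) with hε_def
  have hε0 : 0 < ε := div_pos hm0 hden
  set v : EuclideanSpace ℝ (Fin n) × ℝ → ℝ := fun p => u p - ε * w p with hv_def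
  have hwcont : Continuous w := by
    rw [hw_def]
    apply Continuous.add
    · exact (continuous_const.sub ((continuous_fst.norm).pow 2)).mul
        ((Real.continuous_rpow_const h1a.le).comp continuous_snd)
    · exact continuous_const.mul ((Real.continuous_rpow_const h3a.le).comp continuous_snd)
  have hvK : ContinuousOn v K := (hcont.mono hKclos).sub
    ((continuous_const.mul hwcont).continuousOn)
  obtain ⟨p₀, hp₀K, hp₀min⟩ := hKcpt.exists_isMinOn hKne hvK
  have h3eq : ∀ y : ℝ, 0 < y → y ^ (3 - a) = y ^ 2 * y ^ (1 - a) := by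
    intro y hy
    rw [← Real.rpow_natCast y 2, ← Real.rpow_add hy]
    congr 1
    push_cast
    ring
  by_cases hcase : 0 ≤ v p₀
  · -- conclusion holds with c = ε * A
    refine ⟨ε * A, mul_pos hε0 hA0, y₀, ⟨hy₀0, hy₀1⟩, ?_⟩
    intro y hy
    have hyK : ((0 : EuclideanSpace ℝ (Fin n)), y) ∈ K := by
      refine ⟨by simp [hr0.le], ⟨hy.1.le, hy.2.le⟩⟩
    have h1 : 0 ≤ v (0, y) := hcase.trans (isMinOn_iff.1 hp₀min _ hyK)
    rw [hv_def] at h1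
    simp only [hw_def] at h1
    have hterm : 0 ≤ ε * (cc * y ^ (3 - a)) :=
      mul_nonneg hε0.le (mul_nonneg hcc0.le (Real.rpow_nonneg hy.1.le _))
    have hnz : ‖(0 : EuclideanSpace ℝ (Fin n))‖ = 0 := norm_zero
    simp only [hnz] at h1
    nlinarith [h1, hterm]
  · push_neg at hcase
    exfalso
    have hvp₀ : v p₀ = u p₀ - ε * w p₀ := by rw [hv_def]
    -- p₀ lies in the open small cylinder S
    have hp₀S : p₀ ∈ S := by
      by_contra hp₀S
      have hp1 := hp₀K.1
      have hp2 := hp₀K.2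
      have hu0 : 0 ≤ u p₀ := hu_nonneg p₀ (hKclos hp₀K)
      rcases eq_or_lt_of_le hp2.1 with hy0 | hy0pos
      · -- bottom
        have hw0 : w p₀ = 0 := by
          simp [hw_def, ← hy0, Real.zero_rpow h1a.ne', Real.zero_rpow h3a.ne']
        rw [hvp₀, hw0] at hcase
        linarith
      rcases eq_or_lt_of_le hp2.2 with hyt | hytop
      · -- top
        have hp₀T : p₀ ∈ T := ⟨hp1, by simp [hyt]⟩
        have hum : u z₀ ≤ u p₀ := isMinOn_iff.1 hz₀min _ hp₀T
        have hwle : w p₀ ≤ r ^ 2 * y₀ ^ (1 - a) := by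
          simp only [hw_def]
          rw [hyt, h3eq y₀ hy₀0]
          have hx2 : 0 ≤ ‖p₀.1‖ ^ 2 := sq_nonneg _
          nlinarith [hY₀pos, hA0]
        have hwm : ε * w p₀ ≤ u z₀ := by
          have h2 : ε * w p₀ ≤ ε * (r ^ 2 * y₀ ^ (1 - a)) :=
            mul_le_mul_of_nonneg_left hwle hε0.le
          rw [hε_def] at h2 ⊢
          rwa [div_mul_cancel₀ _ hden.ne'] at h2
        rw [hvp₀] at hcase
        linarith
      · -- lateral
        have hxr : ‖p₀.1‖ = r := by
          have hnb : p₀.1 ∉ Metric.ball (0 : EuclideanSpace ℝ (Fin n)) r := by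
            intro hb
            exact hp₀S ⟨hb, ⟨hy0pos, hytop⟩⟩
          have h1 : ‖p₀.1‖ ≤ r := by simpa using hp1
          have h2 : ¬(‖p₀.1‖ < r) := by
            intro h
            exact hnb (by simpa using h)
          linarith [not_lt.1 h2]
        have hwneg : w p₀ ≤ 0 := by
          have hYpos : 0 ≤ p₀.2 ^ (1 - a) := Real.rpow_nonneg hy0pos.le _
          have hy2 : p₀.2 ^ 2 ≤ y₀ ^ 2 := pow_le_pow_left₀ hy0pos.le hytop.le 2
          have hAr : A - r ^ 2 = -(cc * y₀ ^ 2) := by rw [hA_def]; ring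
          have hw1 : w p₀ = (A - r ^ 2) * p₀.2 ^ (1 - a) + cc * (p₀.2 ^ 2 * p₀.2 ^ (1 - a)) := by
            rw [hw_def]
            simp only []
            rw [hxr, h3eq p₀.2 hy0pos]
          rw [hw1, hAr]
          have hle : cc * p₀.2 ^ (1 - a) * (p₀.2 ^ 2 - y₀ ^ 2) ≤ 0 :=
            mul_nonpos_of_nonneg_of_nonpos (mul_nonneg hcc0.le hYpos) (sub_nonpos.2 hy2)
          nlinarith [hle]
        rw [hvp₀] at hcase
        nlinarith [mul_nonpos_of_nonneg_of_nonpos hε0.le hwneg]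
    -- interior minimum: contradiction with the equation
    have hp₀C : p₀ ∈ C := hSC hp₀S
    have ht₀ : 0 < p₀.2 := hp₀S.2.1
    have hlocmin : IsLocalMin v p₀ := by
      have hnh : S ∈ 𝓝 p₀ := (Metric.isOpen_ball.prod isOpen_Ioo).mem_nhds hp₀S
      filter_upwards [hnh] with q hq using isMinOn_iff.1 hp₀min _ (hSK hq)
    have huC2 : ContDiffAt ℝ 2 u p₀ := hC2.contDiffAt (hCopen.mem_nhds hp₀C)
    have hwC2 : ContDiffAt ℝ 2 w p₀ := by
      rw [hw_def]
      have h1 : ContDiffAt ℝ 2 (fun p : EuclideanSpace ℝ (Fin n) × ℝ => ‖p.1‖ ^ 2) p₀ :=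
        ((contDiff_norm_sq ℝ).comp contDiff_fst).contDiffAt
      have h2 : ContDiffAt ℝ 2 (fun p : EuclideanSpace ℝ (Fin n) × ℝ => p.2 ^ (1 - a)) p₀ :=
        (Real.contDiffAt_rpow_const_of_ne ht₀.ne').comp p₀ contDiff_snd.contDiffAt
      have h3 : ContDiffAt ℝ 2 (fun p : EuclideanSpace ℝ (Fin n) × ℝ => p.2 ^ (3 - a)) p₀ :=
        (Real.contDiffAt_rpow_const_of_ne ht₀.ne').comp p₀ contDiff_snd.contDiffAt
      exact ((contDiffAt_const.sub h1).mul h2).add (contDiffAt_const.mul h3)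
    have hud : DifferentiableAt ℝ u p₀ := huC2.differentiableAt (by norm_num)
    have hwd : DifferentiableAt ℝ w p₀ := hwC2.differentiableAt (by norm_num)
    -- gradient vanishes
    have hgrad : fderiv ℝ v p₀ = 0 := hlocmin.fderiv_eq_zero
    have hfder : fderiv ℝ u p₀ ((0 : EuclideanSpace ℝ (Fin n)), (1 : ℝ))
        = ε * fderiv ℝ w p₀ ((0 : EuclideanSpace ℝ (Fin n)), (1 : ℝ)) := by
      have h := (hud.hasFDerivAt.sub (hwd.hasFDerivAt.const_mul ε)).fderiv
      have h2 : fderiv ℝ v p₀ = fderiv ℝ u p₀ - ε • fderiv ℝ w p₀ := by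
        rw [hv_def]; exact h
      rw [hgrad] at h2
      have h3 := congrArg (fun L : (EuclideanSpace ℝ (Fin n) × ℝ) →L[ℝ] ℝ =>
        L ((0 : EuclideanSpace ℝ (Fin n)), (1 : ℝ))) h2
      simp only [ContinuousLinearMap.zero_apply, ContinuousLinearMap.sub_apply,
        ContinuousLinearMap.smul_apply, smul_eq_mul] at h3
      linarith
    -- line restrictions of w
    set P : ℝ := A - ‖p₀.1‖ ^ 2 with hP_def
    have hwvert_fun : (fun s : ℝ => w (p₀ + s • ((0 : EuclideanSpace ℝ (Fin n)), (1 : ℝ))))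
        = fun s => P * (p₀.2 + s) ^ (1 - a) + cc * (p₀.2 + s) ^ (3 - a) := by
      funext s
      simp [hw_def, hP_def, Prod.fst_add, Prod.snd_add, smul_eq_mul]
    have hw_fd : fderiv ℝ w p₀ ((0 : EuclideanSpace ℝ (Fin n)), (1 : ℝ))
        = P * ((1 - a) * p₀.2 ^ (1 - a - 1)) + cc * ((3 - a) * p₀.2 ^ (3 - a - 1)) := by
      rw [HopfAux.fderiv_line _ hwd, hwvert_fun]
      exact HopfAux.deriv_rpow_pair P cc (1 - a) (3 - a) ht₀
    have hw_d2v : deriv (deriv (fun s : ℝ =>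
        w (p₀ + s • ((0 : EuclideanSpace ℝ (Fin n)), (1 : ℝ))))) 0
        = P * ((1 - a) * ((1 - a - 1) * p₀.2 ^ (1 - a - 1 - 1)))
          + cc * ((3 - a) * ((3 - a - 1) * p₀.2 ^ (3 - a - 1 - 1))) := by
      rw [hwvert_fun]
      exact HopfAux.deriv2_rpow_pair P cc (1 - a) (3 - a) ht₀
    have hw_d2i : ∀ i : Fin n, deriv (deriv (fun s : ℝ =>
        w (p₀ + s • (EuclideanSpace.single i (1 : ℝ), (0 : ℝ))))) 0
        = 2 * (-(p₀.2 ^ (1 - a))) := by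
      intro i
      have hfun : (fun s : ℝ => w (p₀ + s • (EuclideanSpace.single i (1 : ℝ), (0 : ℝ))))
          = fun s => ((A - ‖p₀.1‖ ^ 2) * p₀.2 ^ (1 - a) + cc * p₀.2 ^ (3 - a))
            + (-2 * (p₀.1 i) * p₀.2 ^ (1 - a)) * s + (-(p₀.2 ^ (1 - a))) * s ^ 2 := by
        funext s
        have hn : ‖p₀.1 + s • EuclideanSpace.single i (1 : ℝ)‖ ^ 2
            = ‖p₀.1‖ ^ 2 + 2 * (s * p₀.1 i) + s ^ 2 := by
          rw [norm_add_sq_real, real_inner_smul_right, EuclideanSpace.inner_single_right,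
            norm_smul, EuclideanSpace.norm_single]
          simp [sq_abs]
        simp only [hw_def, Prod.fst_add, Prod.snd_add, Prod.smul_mk, smul_eq_mul, mul_zero,
          add_zero, hn]
        ring
      rw [hfun]
      exact HopfAux.deriv2_quad _ _ _
    -- directional second-derivative inequality at the local minimum
    have hdir : ∀ e : EuclideanSpace ℝ (Fin n) × ℝ,
        ε * deriv (deriv (fun s : ℝ => w (p₀ + s • e))) 0 ≤ iteratedFDeriv ℝ 2 u p₀ ![e, e] := by
      intro e
      have hlineC : ContDiff ℝ 2 (fun s : ℝ => p₀ + s • e) :=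
        contDiff_const.add (contDiff_id.smul contDiff_const)
      have hlc : (fun s : ℝ => p₀ + s • e) 0 = p₀ := by simp
      have hφu : ContDiffAt ℝ 2 (fun s : ℝ => u (p₀ + s • e)) 0 := by
        have := ContDiffAt.comp (0 : ℝ) (hlc ▸ huC2) hlineC.contDiffAt
        simpa [Function.comp_def] using this
      have hφw : ContDiffAt ℝ 2 (fun s : ℝ => w (p₀ + s • e)) 0 := by
        have := ContDiffAt.comp (0 : ℝ) (hlc ▸ hwC2) hlineC.contDiffAt
        simpa [Function.comp_def] using this
      have hmin' : IsLocalMin (fun s : ℝ => v (p₀ + s • e)) 0 := by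
        have htend : Tendsto (fun s : ℝ => p₀ + s • e) (𝓝 0) (𝓝 p₀) := by
          have hc : Continuous (fun s : ℝ => p₀ + s • e) := hlineC.continuous
          have := hc.tendsto 0
          simpa using this
        have h := htend.eventually hlocmin
        show ∀ᶠ s in 𝓝 (0:ℝ), (fun s : ℝ => v (p₀ + s • e)) 0 ≤ v (p₀ + s • e)
        filter_upwards [h] with s hs
        simpa using hs
      have hφv : ContDiffAt ℝ 2 (fun s : ℝ => v (p₀ + s • e)) 0 := by
        rw [hv_def]
        exact hφu.sub (contDiffAt_const.mul hφw)
      have h0 : 0 ≤ deriv (deriv (fun s : ℝ => v (p₀ + s • e))) 0 :=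
        HopfAux.second_deriv_nonneg_of_isLocalMin hφv hmin'
      have hsplit : deriv (deriv (fun s : ℝ => v (p₀ + s • e))) 0
          = deriv (deriv (fun s : ℝ => u (p₀ + s • e))) 0
            - ε * deriv (deriv (fun s : ℝ => w (p₀ + s • e))) 0 := by
        rw [hv_def]
        exact HopfAux.deriv2_sub ε hφu hφw
      have hBu : deriv (deriv (fun s : ℝ => u (p₀ + s • e))) 0
          = iteratedFDeriv ℝ 2 u p₀ ![e, e] :=
        (HopfAux.iteratedFDeriv_two_line e huC2).symm
      rw [hsplit, hBu] at h0
      linarith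
    -- assemble the contradiction
    have hsum := hsuper p₀ hp₀C
    have hYpos : 0 < p₀.2 ^ (1 - a) := Real.rpow_pos_of_pos ht₀ _
    have hlapu : ε * ((n : ℝ) * (2 * (-(p₀.2 ^ (1 - a))))
          + (P * ((1 - a) * ((1 - a - 1) * p₀.2 ^ (1 - a - 1 - 1)))
            + cc * ((3 - a) * ((3 - a - 1) * p₀.2 ^ (3 - a - 1 - 1)))))
        ≤ halfSpaceLaplacian u p₀ := by
      unfold halfSpaceLaplacian
      have h1 : ∑ i : Fin n, (ε * (2 * (-(p₀.2 ^ (1 - a)))))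
          ≤ ∑ i : Fin n, iteratedFDeriv ℝ 2 u p₀
            ![(EuclideanSpace.single i (1 : ℝ), (0 : ℝ)),
              (EuclideanSpace.single i (1 : ℝ), (0 : ℝ))] := by
        apply Finset.sum_le_sum
        intro i _
        have h := hdir (EuclideanSpace.single i (1 : ℝ), (0 : ℝ))
        rwa [hw_d2i i] at h
      have h2 := hdir ((0 : EuclideanSpace ℝ (Fin n)), (1 : ℝ))
      rw [hw_d2v] at h2
      have h1' : (n : ℝ) * (ε * (2 * (-(p₀.2 ^ (1 - a)))))
          ≤ ∑ i : Fin n, iteratedFDeriv ℝ 2 u p₀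
            ![(EuclideanSpace.single i (1 : ℝ), (0 : ℝ)),
              (EuclideanSpace.single i (1 : ℝ), (0 : ℝ))] := by
        calc (n : ℝ) * (ε * (2 * (-(p₀.2 ^ (1 - a)))))
            = ∑ _i : Fin n, (ε * (2 * (-(p₀.2 ^ (1 - a))))) := by
              rw [Finset.sum_const, Finset.card_univ, Fintype.card_fin, nsmul_eq_mul]
          _ ≤ _ := h1
      have hrr : ε * ((n : ℝ) * (2 * (-(p₀.2 ^ (1 - a))))
          + (P * ((1 - a) * ((1 - a - 1) * p₀.2 ^ (1 - a - 1 - 1)))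
            + cc * ((3 - a) * ((3 - a - 1) * p₀.2 ^ (3 - a - 1 - 1)))))
          = (n : ℝ) * (ε * (2 * (-(p₀.2 ^ (1 - a)))))
            + ε * (P * ((1 - a) * ((1 - a - 1) * p₀.2 ^ (1 - a - 1 - 1)))
              + cc * ((3 - a) * ((3 - a - 1) * p₀.2 ^ (3 - a - 1 - 1)))) := by ring
      rw [hrr]
      exact add_le_add h1' h2
    -- rpow identities
    have e1 : p₀.2 ^ (1 - a - 1) = p₀.2 ^ (1 - a) / p₀.2 := Real.rpow_sub_one ht₀.ne' _
    have e2 : p₀.2 ^ (1 - a - 1 - 1) = p₀.2 ^ (1 - a) / p₀.2 / p₀.2 := by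
      rw [Real.rpow_sub_one ht₀.ne', e1]
    have e3 : p₀.2 ^ (3 - a - 1) = p₀.2 ^ (1 - a) * p₀.2 := by
      rw [show (3 - a - 1 : ℝ) = (1 - a) + 1 by ring, Real.rpow_add ht₀, Real.rpow_one]
    have e4 : p₀.2 ^ (3 - a - 1 - 1) = p₀.2 ^ (1 - a) * p₀.2 / p₀.2 := by
      rw [Real.rpow_sub_one ht₀.ne', e3]
    rw [hfder, hw_fd, e1, e3] at hsum
    rw [e2, e4] at hlapu
    -- final positivity
    have hkey : ε * ((n : ℝ) * (2 * (-(p₀.2 ^ (1 - a))))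
          + (P * ((1 - a) * ((1 - a - 1) * (p₀.2 ^ (1 - a) / p₀.2 / p₀.2)))
            + cc * ((3 - a) * ((3 - a - 1) * (p₀.2 ^ (1 - a) * p₀.2 / p₀.2)))))
          + a / p₀.2 * (ε * (P * ((1 - a) * (p₀.2 ^ (1 - a) / p₀.2))
            + cc * ((3 - a) * (p₀.2 ^ (1 - a) * p₀.2))))
        = ε * (2 * p₀.2 ^ (1 - a) * (cc * (3 - a) - (n : ℝ))) := by
      field_simp
      ring
    have hpos' : 0 < ε * (2 * p₀.2 ^ (1 - a) * (cc * (3 - a) - (n : ℝ))) := by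
      have hnn : (0 : ℝ) ≤ (n : ℝ) := Nat.cast_nonneg n
      have hfac : 0 < cc * (3 - a) - (n : ℝ) := by
        rw [hcc_def]
        nlinarith
      positivity
    have h9 : ε * (2 * p₀.2 ^ (1 - a) * (cc * (3 - a) - (n : ℝ))) ≤ 0 := by
      rw [← hkey]
      linarith [hlapu, hsum]
    linarith [h9, hpos']
end

section
/- Let s ∈ (0,1) and λ > 0, and define v : (0,∞) → ℝ by v(y) = (λ^s / Γ(s)) ∫₀^∞ e^{−tλ} e^{−y²/(4t)} t^{s−1} dt. Then: (i) v satisfies the extension ODE v''(y) + ((1−2s)/y) v'(y) = λ v(y) for every y > 0; (ii) lim_{y→0⁺} v(y) = 1; (iii) −lim_{y→0⁺} y^{1−2s} v'(y) = 2^{1−2s} (Γ(1−s)/Γ(s)) λ^s. -/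
open MeasureTheory Real Set Filter

namespace StingaAux

/-- the integrand -/
noncomputable def g (s l y t : ℝ) : ℝ :=
  Real.exp (-(t * l)) * Real.exp (-(y ^ 2 / (4 * t))) * t ^ (s - 1)

noncomputable def g1 (s l y t : ℝ) : ℝ := -(y / (2 * t)) * g s l y t

noncomputable def g2 (s l y t : ℝ) : ℝ := (y ^ 2 / (4 * t ^ 2) - 1 / (2 * t)) * g s l y t

lemma exp_neg_div_le {c t : ℝ} (hc : 0 < c) (ht : 0 < t) : Real.exp (-(c / t)) ≤ t / c := by
  have h : c / t ≤ Real.exp (c / t) := by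
    have := Real.add_one_le_exp (c / t); linarith
  have h2 : (Real.exp (c / t))⁻¹ ≤ (c / t)⁻¹ := inv_anti₀ (by positivity) h
  rw [Real.exp_neg]
  rwa [inv_div] at h2

lemma exp_neg_div_le_sq {c t : ℝ} (hc : 0 < c) (ht : 0 < t) :
    Real.exp (-(c / t)) ≤ 4 * t ^ 2 / c ^ 2 := by
  have h1 : Real.exp (-((c/2) / t)) ≤ t / (c/2) := exp_neg_div_le (by positivity) ht
  have h2 : Real.exp (-(c / t)) = Real.exp (-((c/2)/t)) ^ 2 := by
    rw [← Real.exp_nat_mul]; norm_num; ring_nf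
  rw [h2]
  calc Real.exp (-((c/2)/t)) ^ 2 ≤ (t / (c/2)) ^ 2 := by
        apply pow_le_pow_left₀ (Real.exp_pos _).le h1
  _ = 4 * t ^ 2 / c ^ 2 := by field_simp; ring

lemma bound_integrable {s : ℝ} (hs : 0 < s) {l : ℝ} (hl : 0 < l) :
    IntegrableOn (fun t : ℝ => Real.exp (-(t * l)) * t ^ (s - 1)) (Ioi 0) := by
  have h := integrableOn_rpow_mul_exp_neg_mul_rpow (s := s - 1) (p := 1) (b := l)
    (by linarith) one_pos hl
  refine h.congr_fun (fun t ht => ?_) measurableSet_Ioi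
  beta_reduce
  rw [Real.rpow_one, mul_comm]
  congr 1
  ring

lemma continuousOn_g (s l y : ℝ) : ContinuousOn (g s l y) (Ioi 0) := by
  unfold g
  apply ContinuousOn.mul
  apply ContinuousOn.mul
  · exact (Real.continuous_exp.comp (by continuity)).continuousOn
  · apply ContinuousOn.rexp
    apply ContinuousOn.neg
    apply ContinuousOn.div continuousOn_const ((continuous_const.mul (by fun_prop)).continuousOn)
    intro t ht
    have : (0:ℝ) < t := ht
    simp only [Pi.mul_apply, id_eq]
    positivity
  · exact fun t ht => (Real.continuousAt_rpow_const t _ (Or.inl (ne_of_gt ht))).continuousWithinAt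

lemma continuousOn_g1 (s l y : ℝ) : ContinuousOn (g1 s l y) (Ioi 0) := by
  unfold g1
  apply ContinuousOn.mul _ (continuousOn_g s l y)
  apply ContinuousOn.neg
  apply ContinuousOn.div continuousOn_const ((continuous_const.mul (by fun_prop)).continuousOn)
  intro t ht
  have : (0:ℝ) < t := ht
  simp only [Pi.mul_apply, id_eq]
  positivity

lemma continuousOn_g2 (s l y : ℝ) : ContinuousOn (g2 s l y) (Ioi 0) := by
  unfold g2
  apply ContinuousOn.mul _ (continuousOn_g s l y)
  apply ContinuousOn.sub
  · apply ContinuousOn.div continuousOn_const ((continuous_const.mul (by fun_prop)).continuousOn)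
    intro t ht
    have : (0:ℝ) < t := ht
    simp only [Pi.mul_apply, id_eq]
    positivity
  · apply ContinuousOn.div continuousOn_const ((continuous_const.mul (by fun_prop)).continuousOn)
    intro t ht
    have : (0:ℝ) < t := ht
    simp only [Pi.mul_apply, id_eq]
    positivity

lemma g_nonneg {s l y t : ℝ} (ht : 0 < t) : 0 ≤ g s l y t := by
  unfold g; positivity

lemma g_le_base {s l y t : ℝ} (ht : 0 < t) :
    g s l y t ≤ Real.exp (-(t * l)) * t ^ (s - 1) := by
  unfold g
  have h1 : Real.exp (-(y ^ 2 / (4 * t))) ≤ 1 := by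
    apply Real.exp_le_one_iff.mpr
    have : (0:ℝ) ≤ y ^ 2 / (4 * t) := by positivity
    linarith
  calc Real.exp (-(t * l)) * Real.exp (-(y ^ 2 / (4 * t))) * t ^ (s - 1)
      ≤ Real.exp (-(t * l)) * 1 * t ^ (s - 1) := by
        apply mul_le_mul_of_nonneg_right _ (by positivity)
        exact mul_le_mul_of_nonneg_left h1 (Real.exp_pos _).le
  _ = Real.exp (-(t * l)) * t ^ (s - 1) := by ring

lemma integrableOn_g {s : ℝ} (hs : 0 < s) {l : ℝ} (hl : 0 < l) (y : ℝ) :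
    IntegrableOn (g s l y) (Ioi 0) := by
  apply Integrable.mono' (bound_integrable hs hl)
    ((continuousOn_g s l y).aestronglyMeasurable measurableSet_Ioi)
  filter_upwards [ae_restrict_mem measurableSet_Ioi] with t ht
  rw [Real.norm_of_nonneg (g_nonneg ht)]
  exact g_le_base ht

/-- derivative of `g` in `y` -/
lemma hasDerivAt_g_y (s l : ℝ) {t : ℝ} (ht : 0 < t) (y : ℝ) :
    HasDerivAt (fun y => g s l y t) (g1 s l y t) y := by
  have h0 : HasDerivAt (fun y : ℝ => -(y ^ 2 / (4 * t))) (-(2 * y / (4 * t))) y := by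
    have := ((hasDerivAt_pow 2 y).div_const (4 * t)).fun_neg
    simpa using this
  have h1 : HasDerivAt (fun y : ℝ => Real.exp (-(y ^ 2 / (4 * t))))
      (Real.exp (-(y ^ 2 / (4 * t))) * (-(2 * y / (4 * t)))) y := h0.exp
  have h2 := (h1.const_mul (Real.exp (-(t * l)))).mul_const (t ^ (s - 1) : ℝ)
  refine h2.congr_deriv ?_
  unfold g1 g
  field_simp
  ring

/-- derivative of `g1` in `y` -/
lemma hasDerivAt_g1_y (s l : ℝ) {t : ℝ} (ht : 0 < t) (y : ℝ) :
    HasDerivAt (fun y => g1 s l y t) (g2 s l y t) y := by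
  have hc : HasDerivAt (fun y : ℝ => -(y / (2 * t))) (-(1 / (2 * t))) y := by
    have := ((hasDerivAt_id y).div_const (2 * t)).fun_neg
    simpa using this
  have h := hc.fun_mul (hasDerivAt_g_y s l ht y)
  refine h.congr_deriv ?_
  unfold g2 g1 g
  field_simp
  ring

/-- derivative of `g` in `t` -/
lemma hasDerivAt_g_t (s l y : ℝ) (hs1 : s < 1) {t : ℝ} (ht : 0 < t) :
    HasDerivAt (fun t => g s l y t)
      (g s l y t * (y ^ 2 / (4 * t ^ 2) + (s - 1) / t - l)) t := by
  have h1 : HasDerivAt (fun t : ℝ => Real.exp (-(t * l)))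
      (Real.exp (-(t * l)) * (-l)) t := by
    have := (((hasDerivAt_id t).mul_const l).neg).exp
    simpa using this
  have h0 : HasDerivAt (fun t : ℝ => -(y ^ 2 / (4 * t)))
      (-(-(y ^ 2 / 4) * (t ^ 2)⁻¹)) t := by
    have h := ((hasDerivAt_inv (ne_of_gt ht)).const_mul (y ^ 2 / 4)).fun_neg
    have heq : (fun t : ℝ => -(y ^ 2 / 4 * t⁻¹)) = fun t : ℝ => -(y ^ 2 / (4 * t)) := by
      funext u
      rw [div_eq_mul_inv (y ^ 2) (4 * u), mul_inv]
      ring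
    rw [heq] at h
    refine h.congr_deriv ?_
    field_simp
  have h2 : HasDerivAt (fun t : ℝ => Real.exp (-(y ^ 2 / (4 * t))))
      (Real.exp (-(y ^ 2 / (4 * t))) * (-(-(y ^ 2 / 4) * (t ^ 2)⁻¹))) t := h0.exp
  have h3 : HasDerivAt (fun t : ℝ => t ^ (s - 1) : ℝ → ℝ) ((s - 1) * t ^ (s - 1 - 1)) t :=
    Real.hasDerivAt_rpow_const (Or.inl (ne_of_gt ht))
  have h := (h1.fun_mul h2).fun_mul h3
  refine h.congr_deriv ?_
  have hrw : t ^ (s - 1 - 1) = t ^ (s - 1) / t := by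
    rw [show s - 1 - 1 = (s - 1) - 1 from rfl, Real.rpow_sub ht, Real.rpow_one]
  rw [hrw]
  unfold g
  field_simp
  ring

lemma g_le_mid {s l x y t : ℝ} (hy : 0 < y) (hx : y / 2 < x) (ht : 0 < t) :
    g s l x t ≤ Real.exp (-(y ^ 2 / 16 / t)) * (Real.exp (-(t * l)) * t ^ (s - 1)) := by
  unfold g
  have h1 : Real.exp (-(x ^ 2 / (4 * t))) ≤ Real.exp (-(y ^ 2 / 16 / t)) := by
    apply Real.exp_le_exp.mpr
    have hx2 : y ^ 2 / 4 ≤ x ^ 2 := by nlinarith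
    rw [neg_le_neg_iff, div_le_div_iff₀ (by positivity) (by positivity)]
    nlinarith
  calc Real.exp (-(t * l)) * Real.exp (-(x ^ 2 / (4 * t))) * t ^ (s - 1)
      ≤ Real.exp (-(t * l)) * Real.exp (-(y ^ 2 / 16 / t)) * t ^ (s - 1) := by
        apply mul_le_mul_of_nonneg_right _ (by positivity)
        exact mul_le_mul_of_nonneg_left h1 (Real.exp_pos _).le
  _ = Real.exp (-(y ^ 2 / 16 / t)) * (Real.exp (-(t * l)) * t ^ (s - 1)) := by ring

lemma exp_mid_le {y t : ℝ} (hy : 0 < y) (ht : 0 < t) :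
    Real.exp (-(y ^ 2 / 16 / t)) ≤ 16 * t / y ^ 2 := by
  have := exp_neg_div_le (c := y ^ 2 / 16) (by positivity) ht
  calc Real.exp (-(y ^ 2 / 16 / t)) ≤ t / (y ^ 2 / 16) := this
  _ = 16 * t / y ^ 2 := by field_simp

lemma exp_mid_le_sq {y t : ℝ} (hy : 0 < y) (ht : 0 < t) :
    Real.exp (-(y ^ 2 / 16 / t)) ≤ 1024 * t ^ 2 / y ^ 4 := by
  have := exp_neg_div_le_sq (c := y ^ 2 / 16) (by positivity) ht
  calc Real.exp (-(y ^ 2 / 16 / t)) ≤ 4 * t ^ 2 / (y ^ 2 / 16) ^ 2 := this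
  _ = 1024 * t ^ 2 / y ^ 4 := by field_simp; ring

lemma key1 {s l x y t : ℝ} (hy : 0 < y) (hx1 : y / 2 < x) (hx2 : x < 3 * y / 2)
    (ht : 0 < t) :
    ‖g1 s l x t‖ ≤ 12 / y * (Real.exp (-(t * l)) * t ^ (s - 1)) := by
  have hx0 : 0 < x := lt_trans (by positivity) hx1
  have habs : ‖g1 s l x t‖ = x / (2 * t) * g s l x t := by
    rw [Real.norm_eq_abs]
    unfold g1
    rw [abs_mul, abs_neg, abs_of_nonneg (by positivity : (0:ℝ) ≤ x / (2 * t)),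
      abs_of_nonneg (g_nonneg ht)]
  rw [habs]
  calc x / (2 * t) * g s l x t
      ≤ x / (2 * t) * (16 * t / y ^ 2 * (Real.exp (-(t * l)) * t ^ (s - 1))) := by
        apply mul_le_mul_of_nonneg_left _ (by positivity)
        calc g s l x t ≤ Real.exp (-(y ^ 2 / 16 / t)) * (Real.exp (-(t * l)) * t ^ (s - 1)) :=
              g_le_mid hy hx1 ht
        _ ≤ 16 * t / y ^ 2 * (Real.exp (-(t * l)) * t ^ (s - 1)) :=
              mul_le_mul_of_nonneg_right (exp_mid_le hy ht) (by positivity)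
  _ = 8 * x / y ^ 2 * (Real.exp (-(t * l)) * t ^ (s - 1)) := by field_simp; ring
  _ ≤ 12 / y * (Real.exp (-(t * l)) * t ^ (s - 1)) := by
        apply mul_le_mul_of_nonneg_right _ (by positivity)
        rw [div_le_div_iff₀ (by positivity) hy]
        nlinarith

lemma key2 {s l x y t : ℝ} (hy : 0 < y) (hx1 : y / 2 < x) (hx2 : x < 3 * y / 2)
    (ht : 0 < t) :
    ‖g2 s l x t‖ ≤ 584 / y ^ 2 * (Real.exp (-(t * l)) * t ^ (s - 1)) := by
  have hx0 : 0 < x := lt_trans (by positivity) hx1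
  have habs : ‖g2 s l x t‖ ≤ (x ^ 2 / (4 * t ^ 2) + 1 / (2 * t)) * g s l x t := by
    rw [Real.norm_eq_abs]
    unfold g2
    rw [abs_mul, abs_of_nonneg (g_nonneg ht)]
    apply mul_le_mul_of_nonneg_right _ (g_nonneg ht)
    rw [abs_sub_comm]
    calc |1 / (2 * t) - x ^ 2 / (4 * t ^ 2)| ≤ |1 / (2 * t)| + |x ^ 2 / (4 * t ^ 2)| :=
          abs_sub _ _
    _ = x ^ 2 / (4 * t ^ 2) + 1 / (2 * t) := by
          rw [abs_of_nonneg (by positivity : (0:ℝ) ≤ 1 / (2 * t)),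
            abs_of_nonneg (by positivity : (0:ℝ) ≤ x ^ 2 / (4 * t ^ 2))]
          ring
  refine le_trans habs ?_
  have hg := g_le_mid (s := s) (l := l) hy hx1 ht
  rw [add_mul]
  have t1 : x ^ 2 / (4 * t ^ 2) * g s l x t
      ≤ 576 / y ^ 2 * (Real.exp (-(t * l)) * t ^ (s - 1)) := by
    calc x ^ 2 / (4 * t ^ 2) * g s l x t
        ≤ x ^ 2 / (4 * t ^ 2) * (1024 * t ^ 2 / y ^ 4 * (Real.exp (-(t * l)) * t ^ (s - 1))) := by
          apply mul_le_mul_of_nonneg_left _ (by positivity)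
          exact le_trans hg (mul_le_mul_of_nonneg_right (exp_mid_le_sq hy ht) (by positivity))
    _ = 256 * x ^ 2 / y ^ 4 * (Real.exp (-(t * l)) * t ^ (s - 1)) := by field_simp; ring
    _ ≤ 576 / y ^ 2 * (Real.exp (-(t * l)) * t ^ (s - 1)) := by
          apply mul_le_mul_of_nonneg_right _ (by positivity)
          rw [div_le_div_iff₀ (by positivity) (by positivity)]
          have hx2' : x ^ 2 ≤ 9 * y ^ 2 / 4 := by nlinarith
          nlinarith [mul_le_mul_of_nonneg_right hx2' (sq_nonneg y)]
  have t2 : 1 / (2 * t) * g s l x t ≤ 8 / y ^ 2 * (Real.exp (-(t * l)) * t ^ (s - 1)) := by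
    calc 1 / (2 * t) * g s l x t
        ≤ 1 / (2 * t) * (16 * t / y ^ 2 * (Real.exp (-(t * l)) * t ^ (s - 1))) := by
          apply mul_le_mul_of_nonneg_left _ (by positivity)
          exact le_trans hg (mul_le_mul_of_nonneg_right (exp_mid_le hy ht) (by positivity))
    _ = 8 / y ^ 2 * (Real.exp (-(t * l)) * t ^ (s - 1)) := by field_simp; ring
  calc x ^ 2 / (4 * t ^ 2) * g s l x t + 1 / (2 * t) * g s l x t
      ≤ 576 / y ^ 2 * (Real.exp (-(t * l)) * t ^ (s - 1))
        + 8 / y ^ 2 * (Real.exp (-(t * l)) * t ^ (s - 1)) := add_le_add t1 t2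
  _ = 584 / y ^ 2 * (Real.exp (-(t * l)) * t ^ (s - 1)) := by ring

lemma ball_sub {y x : ℝ} (hy : 0 < y) (hx : x ∈ Metric.ball y (y / 2)) :
    y / 2 < x ∧ x < 3 * y / 2 := by
  rw [Metric.mem_ball, Real.dist_eq, abs_lt] at hx
  constructor <;> linarith [hx.1, hx.2]

lemma deriv1 {s : ℝ} (hs : s ∈ Ioo (0:ℝ) 1) {l : ℝ} (hl : 0 < l) {y : ℝ} (hy : 0 < y) :
    IntegrableOn (g1 s l y) (Ioi 0) ∧
      HasDerivAt (fun x => ∫ t in Ioi 0, g s l x t) (∫ t in Ioi 0, g1 s l y t) y := by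
  have h := hasDerivAt_integral_of_dominated_loc_of_deriv_le
    (F := fun x t => g s l x t) (F' := fun x t => g1 s l x t) (x₀ := y)
    (μ := volume.restrict (Ioi 0))
    (bound := fun t => 12 / y * (Real.exp (-(t * l)) * t ^ (s - 1)))
    (Metric.ball_mem_nhds y (by positivity : (0:ℝ) < y / 2))
    (Filter.Eventually.of_forall fun x =>
      (continuousOn_g s l x).aestronglyMeasurable measurableSet_Ioi)
    (integrableOn_g hs.1 hl y)
    ((continuousOn_g1 s l y).aestronglyMeasurable measurableSet_Ioi)
    ?_ ?_ ?_
  · exact h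
  · filter_upwards [ae_restrict_mem measurableSet_Ioi] with t ht x hx
    obtain ⟨h1, h2⟩ := ball_sub hy hx
    exact key1 hy h1 h2 ht
  · exact ((bound_integrable hs.1 hl).const_mul _)
  · filter_upwards [ae_restrict_mem measurableSet_Ioi] with t ht x _
    exact hasDerivAt_g_y s l ht x

lemma deriv2 {s : ℝ} (hs : s ∈ Ioo (0:ℝ) 1) {l : ℝ} (hl : 0 < l) {y : ℝ} (hy : 0 < y) :
    IntegrableOn (g2 s l y) (Ioi 0) ∧
      HasDerivAt (fun x => ∫ t in Ioi 0, g1 s l x t) (∫ t in Ioi 0, g2 s l y t) y := by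
  have h := hasDerivAt_integral_of_dominated_loc_of_deriv_le
    (F := fun x t => g1 s l x t) (F' := fun x t => g2 s l x t) (x₀ := y)
    (μ := volume.restrict (Ioi 0))
    (bound := fun t => 584 / y ^ 2 * (Real.exp (-(t * l)) * t ^ (s - 1)))
    (Metric.ball_mem_nhds y (by positivity : (0:ℝ) < y / 2))
    (Filter.Eventually.of_forall fun x =>
      (continuousOn_g1 s l x).aestronglyMeasurable measurableSet_Ioi)
    (deriv1 hs hl hy).1
    ((continuousOn_g2 s l y).aestronglyMeasurable measurableSet_Ioi)
    ?_ ?_ ?_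
  · exact h
  · filter_upwards [ae_restrict_mem measurableSet_Ioi] with t ht x hx
    obtain ⟨h1, h2⟩ := ball_sub hy hx
    exact key2 hy h1 h2 ht
  · exact ((bound_integrable hs.1 hl).const_mul _)
  · filter_upwards [ae_restrict_mem measurableSet_Ioi] with t ht x _
    exact hasDerivAt_g1_y s l ht x

lemma g_zero {s l y : ℝ} (hs1 : s < 1) : g s l y 0 = 0 := by
  unfold g
  rw [Real.zero_rpow (by linarith : s - 1 ≠ 0)]
  ring

lemma contWithin_g_t {s l : ℝ} (hs : s ∈ Ioo (0:ℝ) 1) (hl : 0 < l) {y : ℝ} (hy : 0 < y) :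
    ContinuousWithinAt (fun t => g s l y t) (Ici 0) 0 := by
  have h0 : g s l y 0 = 0 := g_zero hs.2
  unfold ContinuousWithinAt
  have h0' : (fun t => g s l y t) 0 = (0:ℝ) := h0
  rw [h0']
  apply squeeze_zero' (g := fun t => 4 / y ^ 2 * t ^ s)
  · filter_upwards [self_mem_nhdsWithin] with t ht
    rcases eq_or_lt_of_le (mem_Ici.mp ht) with h | h
    · rw [← h, g_zero hs.2]
    · exact g_nonneg h
  · filter_upwards [self_mem_nhdsWithin] with t ht
    rcases eq_or_lt_of_le (mem_Ici.mp ht) with h | h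
    · rw [← h, g_zero hs.2, Real.zero_rpow (ne_of_gt hs.1)]
      simp
    · have hts : t ^ s = t * t ^ (s - 1) := by
        rw [show s = 1 + (s - 1) by ring, Real.rpow_add h, Real.rpow_one]
        ring_nf
      have he1 : Real.exp (-(t * l)) ≤ 1 := by
        apply Real.exp_le_one_iff.mpr
        have : (0:ℝ) ≤ t * l := by positivity
        linarith
      have he2 : Real.exp (-(y ^ 2 / (4 * t))) ≤ 4 * t / y ^ 2 := by
        have := exp_neg_div_le (c := y ^ 2 / 4) (by positivity) h
        rw [div_div] at this
        calc Real.exp (-(y ^ 2 / (4 * t))) ≤ t / (y ^ 2 / 4) := this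
        _ = 4 * t / y ^ 2 := by field_simp
      unfold g
      calc Real.exp (-(t * l)) * Real.exp (-(y ^ 2 / (4 * t))) * t ^ (s - 1)
          ≤ 1 * (4 * t / y ^ 2) * t ^ (s - 1) := by
            apply mul_le_mul_of_nonneg_right _ (by positivity)
            exact mul_le_mul he1 he2 (Real.exp_pos _).le zero_le_one
      _ = 4 / y ^ 2 * (t * t ^ (s - 1)) := by ring
      _ = 4 / y ^ 2 * t ^ s := by rw [← hts]
  · have hc : Tendsto (fun t : ℝ => t ^ s) (nhds 0) (nhds ((0:ℝ) ^ s)) :=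
      (Real.continuousAt_rpow_const 0 s (Or.inr hs.1.le)).tendsto
    rw [Real.zero_rpow (ne_of_gt hs.1)] at hc
    have h2 := (hc.const_mul (4 / y ^ 2)).mono_left
      (nhdsWithin_le_nhds (s := Ici (0:ℝ)) (a := (0:ℝ)))
    simpa using h2

lemma tendsto_g_top {s l : ℝ} (hs : s ∈ Ioo (0:ℝ) 1) (hl : 0 < l) (y : ℝ) :
    Tendsto (fun t => g s l y t) atTop (nhds 0) := by
  apply squeeze_zero' (g := fun t => t ^ (s - 1) * Real.exp (-l * t))
  · filter_upwards [eventually_gt_atTop (0:ℝ)] with t ht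
    exact g_nonneg ht
  · filter_upwards [eventually_gt_atTop (0:ℝ)] with t ht
    have := g_le_base (s := s) (l := l) (y := y) ht
    calc g s l y t ≤ Real.exp (-(t * l)) * t ^ (s - 1) := this
    _ = t ^ (s - 1) * Real.exp (-l * t) := by rw [mul_comm]; congr 1; ring
  · exact tendsto_rpow_mul_exp_neg_mul_atTop_nhds_zero (s - 1) l hl

lemma combo_eq {s l y t : ℝ} (hy : 0 < y) (ht : 0 < t) :
    g2 s l y t + (1 - 2 * s) / y * g1 s l y t - l * g s l y t
      = g s l y t * (y ^ 2 / (4 * t ^ 2) + (s - 1) / t - l) := by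
  unfold g2 g1
  field_simp
  ring

lemma integral_combo {s : ℝ} (hs : s ∈ Ioo (0:ℝ) 1) {l : ℝ} (hl : 0 < l) {y : ℝ}
    (hy : 0 < y) :
    ∫ t in Ioi 0, (g2 s l y t + (1 - 2 * s) / y * g1 s l y t - l * g s l y t) = 0 := by
  have hint : IntegrableOn
      (fun t => g2 s l y t + (1 - 2 * s) / y * g1 s l y t - l * g s l y t) (Ioi 0) :=
    ((deriv2 hs hl hy).1.add ((deriv1 hs hl hy).1.const_mul _)).sub
      ((integrableOn_g hs.1 hl y).const_mul l)
  have hint' : IntegrableOn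
      (fun t => g s l y t * (y ^ 2 / (4 * t ^ 2) + (s - 1) / t - l)) (Ioi 0) := by
    refine hint.congr_fun (fun t ht => combo_eq hy ht) measurableSet_Ioi
  have hftc := integral_Ioi_of_hasDerivAt_of_tendsto (a := (0:ℝ))
    (f := fun t => g s l y t)
    (f' := fun t => g s l y t * (y ^ 2 / (4 * t ^ 2) + (s - 1) / t - l))
    (contWithin_g_t hs hl hy)
    (fun t ht => hasDerivAt_g_t s l y hs.2 ht)
    hint' (tendsto_g_top hs hl y)
  rw [setIntegral_congr_fun measurableSet_Ioi (fun t ht => combo_eq hy ht)]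
  refine hftc.trans ?_
  show (0:ℝ) - g s l y 0 = 0
  rw [g_zero hs.2, sub_zero]

lemma base_value {s : ℝ} (hs : 0 < s) {l : ℝ} (hl : 0 < l) :
    ∫ t in Ioi 0, Real.exp (-(t * l)) * t ^ (s - 1) = (1 / l) ^ s * Real.Gamma s := by
  rw [setIntegral_congr_fun measurableSet_Ioi
    (fun t (_ : t ∈ Ioi 0) => by
      show Real.exp (-(t * l)) * t ^ (s - 1) = t ^ (s - 1) * Real.exp (-(l * t))
      rw [show -(t * l) = -(l * t) by ring, mul_comm] :
      EqOn (fun t : ℝ => Real.exp (-(t * l)) * t ^ (s - 1))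
        (fun t : ℝ => t ^ (s - 1) * Real.exp (-(l * t))) (Ioi 0))]
  exact Real.integral_rpow_mul_exp_neg_mul_Ioi hs hl

lemma tendsto_int_g_zero {s : ℝ} (hs : s ∈ Ioo (0:ℝ) 1) {l : ℝ} (hl : 0 < l) :
    Tendsto (fun y => ∫ t in Ioi 0, g s l y t) (nhdsWithin 0 (Ioi 0))
      (nhds ((1 / l) ^ s * Real.Gamma s)) := by
  rw [← base_value hs.1 hl]
  apply tendsto_integral_filter_of_dominated_convergence
    (bound := fun t => Real.exp (-(t * l)) * t ^ (s - 1))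
  · exact Filter.Eventually.of_forall fun y =>
      (continuousOn_g s l y).aestronglyMeasurable measurableSet_Ioi
  · apply Filter.Eventually.of_forall
    intro y
    filter_upwards [ae_restrict_mem measurableSet_Ioi] with t ht
    rw [Real.norm_of_nonneg (g_nonneg ht)]
    exact g_le_base ht
  · exact bound_integrable hs.1 hl
  · filter_upwards [ae_restrict_mem measurableSet_Ioi] with t ht
    have hcy : Continuous (fun y : ℝ => g s l y t) := by
      unfold g
      apply Continuous.mul
      apply Continuous.mul continuous_const
      · exact Real.continuous_exp.comp ((continuous_pow 2).div_const (4 * t)).neg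
      · exact continuous_const
    have h := (hcy.tendsto 0).mono_left
      (nhdsWithin_le_nhds (s := Ioi (0:ℝ)) (a := (0:ℝ)))
    have h0 : g s l 0 t = Real.exp (-(t * l)) * t ^ (s - 1) := by
      unfold g
      norm_num
    rwa [h0] at h

lemma four_rpow {s : ℝ} : (4:ℝ) ^ (1 - s) = 2 * 2 ^ (1 - 2 * s) := by
  rw [show (4:ℝ) = (2:ℝ) ^ (2:ℕ) by norm_num, ← Real.rpow_natCast (2:ℝ) 2,
    ← Real.rpow_mul (by norm_num : (0:ℝ) ≤ 2),
    show ((2:ℕ):ℝ) * (1 - s) = 1 + (1 - 2 * s) by push_cast; ring,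
    Real.rpow_add (by norm_num : (0:ℝ) < 2), Real.rpow_one]

lemma rpow_piece {y u : ℝ} (hy : 0 < y) (hu : 0 < u) (s : ℝ) :
    (y ^ 2 / (4 * u)) ^ (s - 1) = y ^ (2 * s - 2) / ((4:ℝ) ^ (s - 1) * u ^ (s - 1)) := by
  rw [Real.div_rpow (by positivity) (by positivity),
    Real.mul_rpow (by norm_num : (0:ℝ) ≤ 4) hu.le,
    ← Real.rpow_natCast y 2, ← Real.rpow_mul hy.le]
  norm_num
  rw [show 2 * (s - 1) = 2 * s - 2 by ring]

lemma subst {s l y : ℝ} (hy : 0 < y) :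
    ∫ t in Ioi 0, y / (2 * t) * g s l y t
      = ∫ u in Ioi 0, 2 ^ (1 - 2 * s) * y ^ (2 * s - 1) *
          (Real.exp (-(y ^ 2 / (4 * u) * l)) * (Real.exp (-u) * u ^ (-s))) := by
  have hb : (0:ℝ) < 4 / y ^ 2 := by positivity
  have h1 := integral_comp_rpow_Ioi (fun t => y / (2 * t) * g s l y t) (p := (-1:ℝ))
    (by norm_num)
  have h2 := integral_comp_mul_left_Ioi
    (fun x => (|(-1:ℝ)| * x ^ ((-1:ℝ) - 1)) •
      ((fun t => y / (2 * t) * g s l y t) (x ^ (-1:ℝ)))) 0 hb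
  rw [mul_zero] at h2
  rw [← h1]
  have h3 : (∫ x in Ioi (0:ℝ), (|(-1:ℝ)| * x ^ ((-1:ℝ) - 1)) •
      ((fun t => y / (2 * t) * g s l y t) (x ^ (-1:ℝ))))
      = (4 / y ^ 2) * ∫ x in Ioi (0:ℝ), (|(-1:ℝ)| * (4 / y ^ 2 * x) ^ ((-1:ℝ) - 1)) •
          ((fun t => y / (2 * t) * g s l y t) ((4 / y ^ 2 * x) ^ (-1:ℝ))) := by
    rw [h2, smul_eq_mul, ← mul_assoc, mul_inv_cancel₀ (ne_of_gt hb), one_mul]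
  rw [h3, ← integral_const_mul]
  apply setIntegral_congr_fun measurableSet_Ioi
  intro u hu
  have hu0 : (0:ℝ) < u := hu
  have hbu : (0:ℝ) < 4 / y ^ 2 * u := by positivity
  simp only [smul_eq_mul, abs_neg, abs_one, one_mul]
  have hinv : (4 / y ^ 2 * u) ^ (-1:ℝ) = y ^ 2 / (4 * u) := by
    rw [Real.rpow_neg_one, eq_div_iff (by positivity : (4:ℝ) * u ≠ 0)]
    field_simp
  have hm2 : (4 / y ^ 2 * u) ^ ((-1:ℝ) - 1) = ((4 / y ^ 2 * u) ^ (2:ℕ))⁻¹ := by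
    rw [show ((-1:ℝ) - 1) = -(2:ℝ) by norm_num, Real.rpow_neg hbu.le,
      ← Real.rpow_natCast (4 / y ^ 2 * u) 2]
    norm_num
  rw [hinv, hm2]
  show 4 / y ^ 2 * (((4 / y ^ 2 * u) ^ (2:ℕ))⁻¹ *
      (y / (2 * (y ^ 2 / (4 * u))) * g s l y (y ^ 2 / (4 * u)))) = _
  unfold g
  have ea : y ^ 2 / (4 * (y ^ 2 / (4 * u))) = u := by
    field_simp
  rw [ea, rpow_piece hy hu0 s]
  have p1 : y ^ (2 * s - 1) = y ^ (2 * s - 2) * y := by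
    rw [show 2 * s - 1 = (2 * s - 2) + 1 by ring, Real.rpow_add hy, Real.rpow_one]
  have p2 : u ^ (s - 1) = u ^ s / u := by
    rw [Real.rpow_sub hu0, Real.rpow_one]
  have p4 : u ^ (-s) = (u ^ s)⁻¹ := by
    rw [Real.rpow_neg hu0.le]
  have p3 : (4:ℝ) ^ (s - 1) = 4 ^ s / 4 := by
    rw [Real.rpow_sub (by norm_num : (0:ℝ) < 4), Real.rpow_one]
  have p5 : (4:ℝ) ^ s * 2 ^ (1 - 2 * s) = 2 := by
    have h := four_rpow (s := s)
    have h4 : (4:ℝ) ^ (1 - s) * 4 ^ s = 4 := by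
      rw [← Real.rpow_add (by norm_num : (0:ℝ) < 4)]
      norm_num
    rw [h] at h4
    linarith
  rw [p1, p2, p3, p4]
  have hy2 : (y:ℝ) ≠ 0 := ne_of_gt hy
  have hu2 : (u:ℝ) ≠ 0 := ne_of_gt hu0
  have hus : (u:ℝ) ^ s ≠ 0 := ne_of_gt (Real.rpow_pos_of_pos hu0 s)
  have h4s : (4:ℝ) ^ s ≠ 0 := ne_of_gt (Real.rpow_pos_of_pos (by norm_num) s)
  field_simp
  linear_combination (-2:ℝ) * p5

lemma gamma_one_sub {s : ℝ} (hs : s < 1) :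
    ∫ u in Ioi 0, Real.exp (-u) * u ^ (-s) = Real.Gamma (1 - s) := by
  have h := Real.integral_rpow_mul_exp_neg_mul_Ioi (a := 1 - s) (r := 1)
    (by linarith) one_pos
  rw [setIntegral_congr_fun measurableSet_Ioi
    (fun u (hu : u ∈ Ioi 0) => by
      show Real.exp (-u) * u ^ (-s) = u ^ (1 - s - 1) * Real.exp (-(1 * u))
      rw [show (1:ℝ) - s - 1 = -s by ring, one_mul, mul_comm] :
      EqOn (fun u : ℝ => Real.exp (-u) * u ^ (-s))
        (fun u : ℝ => u ^ (1 - s - 1) * Real.exp (-(1 * u))) (Ioi 0)), h]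
  norm_num

lemma integrable_gamma_one_sub {s : ℝ} (hs : s < 1) :
    IntegrableOn (fun u : ℝ => Real.exp (-u) * u ^ (-s)) (Ioi 0) := by
  have h := bound_integrable (s := 1 - s) (by linarith) (l := 1) one_pos
  refine h.congr_fun (fun u hu => ?_) measurableSet_Ioi
  beta_reduce
  rw [mul_one, show (1:ℝ) - s - 1 = -s by ring]

lemma continuousOn_J (s l y : ℝ) :
    ContinuousOn (fun u : ℝ => Real.exp (-(y ^ 2 / (4 * u) * l)) *
      (Real.exp (-u) * u ^ (-s))) (Ioi 0) := by
  apply ContinuousOn.mul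
  · apply ContinuousOn.rexp
    apply ContinuousOn.neg
    apply ContinuousOn.mul _ continuousOn_const
    apply ContinuousOn.div continuousOn_const
      ((continuous_const.mul continuous_id).continuousOn)
    intro u hu
    have : (0:ℝ) < u := hu
    simp only [Pi.mul_apply, id_eq]
    positivity
  · apply ContinuousOn.mul (Real.continuous_exp.comp continuous_neg).continuousOn
    exact fun u hu => (Real.continuousAt_rpow_const u _ (Or.inl (ne_of_gt hu))).continuousWithinAt

lemma tendsto_J {s : ℝ} (hs : s ∈ Ioo (0:ℝ) 1) {l : ℝ} (hl : 0 < l) :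
    Tendsto (fun y => ∫ u in Ioi 0, Real.exp (-(y ^ 2 / (4 * u) * l)) *
        (Real.exp (-u) * u ^ (-s)))
      (nhdsWithin 0 (Ioi 0)) (nhds (Real.Gamma (1 - s))) := by
  rw [← gamma_one_sub hs.2]
  apply tendsto_integral_filter_of_dominated_convergence
    (bound := fun u => Real.exp (-u) * u ^ (-s))
  · exact Filter.Eventually.of_forall fun y =>
      (continuousOn_J s l y).aestronglyMeasurable measurableSet_Ioi
  · apply Filter.Eventually.of_forall
    intro y
    filter_upwards [ae_restrict_mem measurableSet_Ioi] with u hu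
    have hu0 : (0:ℝ) < u := hu
    rw [Real.norm_of_nonneg (by positivity)]
    have h1 : Real.exp (-(y ^ 2 / (4 * u) * l)) ≤ 1 := by
      apply Real.exp_le_one_iff.mpr
      have : (0:ℝ) ≤ y ^ 2 / (4 * u) * l := by positivity
      linarith
    calc Real.exp (-(y ^ 2 / (4 * u) * l)) * (Real.exp (-u) * u ^ (-s))
        ≤ 1 * (Real.exp (-u) * u ^ (-s)) :=
          mul_le_mul_of_nonneg_right h1 (by positivity)
    _ = Real.exp (-u) * u ^ (-s) := one_mul _
  · exact integrable_gamma_one_sub hs.2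
  · filter_upwards [ae_restrict_mem measurableSet_Ioi] with u hu
    have hu0 : (0:ℝ) < u := hu
    have hcy : Continuous (fun y : ℝ => Real.exp (-(y ^ 2 / (4 * u) * l)) *
        (Real.exp (-u) * u ^ (-s))) := by
      apply Continuous.mul _ continuous_const
      exact Real.continuous_exp.comp
        (((continuous_pow 2).div_const (4 * u)).mul continuous_const).neg
    have h := (hcy.tendsto 0).mono_left
      (nhdsWithin_le_nhds (s := Ioi (0:ℝ)) (a := (0:ℝ)))
    have h0 : Real.exp (-((0:ℝ) ^ 2 / (4 * u) * l)) * (Real.exp (-u) * u ^ (-s))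
        = Real.exp (-u) * u ^ (-s) := by
      norm_num
    rwa [h0] at h

end StingaAux

open StingaAux

/-- Scalar (single-eigenvalue) form of the **Stinga–Torrea extension theorem**: the function
`v(y) = (λ^s/Γ(s)) ∫₀^∞ e^{-tλ} e^{-y²/(4t)} t^{s-1} dt` solves the extension ODE
`v'' + ((1-2s)/y)v' = λ v` on `(0,∞)`, has boundary value `1`, and its weighted normal
derivative recovers `2^{1-2s}(Γ(1-s)/Γ(s)) λ^s`. -/
theorem stinga_torrea_scalar_extension (s l : ℝ) (hs : s ∈ Set.Ioo (0 : ℝ) 1) (hl : 0 < l)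
    (v : ℝ → ℝ)
    (hv : ∀ y, v y = l ^ s / Real.Gamma s *
      ∫ t in Set.Ioi (0 : ℝ), Real.exp (-(t * l)) * Real.exp (-(y ^ 2 / (4 * t))) * t ^ (s - 1)) :
    (∀ y > (0 : ℝ), deriv (deriv v) y + (1 - 2 * s) / y * deriv v y = l * v y)
    ∧ Filter.Tendsto v (nhdsWithin 0 (Set.Ioi 0)) (nhds 1)
    ∧ Filter.Tendsto (fun y : ℝ => y ^ (1 - 2 * s) * deriv v y) (nhdsWithin 0 (Set.Ioi 0))
        (nhds (-((2 : ℝ) ^ (1 - 2 * s) * (Real.Gamma (1 - s) / Real.Gamma s) * l ^ s))) := by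
  have hΓ : 0 < Real.Gamma s := Real.Gamma_pos_of_pos hs.1
  set c := l ^ s / Real.Gamma s with hc
  have hveq : v = fun y => c * ∫ t in Ioi 0, g s l y t := funext fun y => hv y
  have hd1 : ∀ y : ℝ, 0 < y → HasDerivAt v (c * ∫ t in Ioi 0, g1 s l y t) y := by
    intro y hy
    rw [hveq]
    exact (deriv1 hs hl hy).2.const_mul c
  have hderiv_v : ∀ y : ℝ, 0 < y → deriv v y = c * ∫ t in Ioi 0, g1 s l y t :=
    fun y hy => (hd1 y hy).deriv
  refine ⟨?_, ?_, ?_⟩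
  · -- ODE
    intro y hy
    have hev : deriv v =ᶠ[nhds y] fun x => c * ∫ t in Ioi 0, g1 s l x t := by
      filter_upwards [isOpen_Ioi.mem_nhds (show y ∈ Ioi 0 from hy)] with x hx
      exact hderiv_v x hx
    have hdd : deriv (deriv v) y = c * ∫ t in Ioi 0, g2 s l y t := by
      rw [hev.deriv_eq]
      exact ((deriv2 hs hl hy).2.const_mul c).deriv
    rw [hdd, hderiv_v y hy, hveq]
    have h0 := integral_combo hs hl hy
    have hI : (∫ t in Ioi 0, g2 s l y t) + (1 - 2 * s) / y * (∫ t in Ioi 0, g1 s l y t)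
        - l * (∫ t in Ioi 0, g s l y t) = 0 := by
      have ha : IntegrableOn (fun t => g2 s l y t) (Ioi 0) := (deriv2 hs hl hy).1
      have hb : IntegrableOn (fun t => (1 - 2 * s) / y * g1 s l y t) (Ioi 0) :=
        (deriv1 hs hl hy).1.const_mul _
      have hab : IntegrableOn (fun t => g2 s l y t + (1 - 2 * s) / y * g1 s l y t) (Ioi 0) :=
        ha.add hb
      have hlg : IntegrableOn (fun t => l * g s l y t) (Ioi 0) :=
        (integrableOn_g hs.1 hl y).const_mul l
      rw [← integral_const_mul, ← integral_const_mul, ← integral_add ha hb,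
        ← integral_sub hab hlg]
      exact h0
    show c * (∫ t in Ioi 0, g2 s l y t) + (1 - 2 * s) / y * (c * ∫ t in Ioi 0, g1 s l y t)
      = l * (c * ∫ t in Ioi 0, g s l y t)
    linear_combination c * hI
  · -- boundary value
    rw [hveq]
    have ht := (tendsto_int_g_zero hs hl).const_mul c
    have hval : c * ((1 / l) ^ s * Real.Gamma s) = 1 := by
      rw [one_div, Real.inv_rpow hl.le, hc]
      field_simp
    rwa [hval] at ht
  · -- weighted derivative
    have htarget := (tendsto_J hs hl).const_mul (-(c * 2 ^ (1 - 2 * s)))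
    have hval : -(c * 2 ^ (1 - 2 * s)) * Real.Gamma (1 - s)
        = -((2 : ℝ) ^ (1 - 2 * s) * (Real.Gamma (1 - s) / Real.Gamma s) * l ^ s) := by
      rw [hc]; ring
    rw [hval] at htarget
    apply htarget.congr'
    filter_upwards [self_mem_nhdsWithin] with y hy
    have hy0 : (0:ℝ) < y := hy
    rw [hderiv_v y hy0]
    have hneg : ∫ t in Ioi 0, g1 s l y t = -∫ t in Ioi 0, y / (2 * t) * g s l y t := by
      rw [← integral_neg]
      apply setIntegral_congr_fun measurableSet_Ioi
      intro t ht
      show g1 s l y t = -(y / (2 * t) * g s l y t)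
      unfold g1
      ring
    rw [hneg, subst hy0, integral_const_mul]
    have yy : y ^ (1 - 2 * s) * y ^ (2 * s - 1) = 1 := by
      rw [← Real.rpow_add hy0]
      norm_num
    set J := ∫ u in Ioi 0, Real.exp (-(y ^ 2 / (4 * u) * l)) * (Real.exp (-u) * u ^ (-s))
    show -(c * 2 ^ (1 - 2 * s)) * J
      = y ^ (1 - 2 * s) * (c * -(2 ^ (1 - 2 * s) * y ^ (2 * s - 1) * J))
    linear_combination (c * 2 ^ (1 - 2 * s) * J) * yy
end
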